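/- arXiv:2108.08033 — 14 statements merged into one kernel-verified Lean document; each statement's English description precedes it below -/
import Mathlib

section
/- Let $n \ge 1$ and let $\mathbf{C}$ be a chain of subsets of $[n]$ (a family of subsets pairwise comparable under inclusion) such that at least one of $\varnothing$ and $[n]$ is not a member of $\mathbf{C}$. Then the poset $\mathbf{B}_n - \mathbf{C}$, i.e. the family of all subsets of $[n]$ not in $\mathbf{C}$ ordered by inclusion, contains a copy of the Boolean lattice $\mathbf{B}_{n-1}$ as a subposet; that is, there is an injection $\phi$ from the subsets of $[n-1]$ into the subsets of $[n]$ avoiding $\mathbf{C}$ such that $X \subseteq Y$ if and only if $\phi(X) \subseteq \phi(Y)$. -/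
/-- Removing a chain (missing `∅` or `[n]`) from the Boolean lattice `B_n`
leaves a copy of `B_{n-1}`. -/
theorem chain_removal (n : ℕ) (hn : 1 ≤ n) (C : Set (Finset (Fin n)))
    (hC : IsChain (· ⊆ ·) C)
    (hend : (∅ : Finset (Fin n)) ∉ C ∨ (Finset.univ : Finset (Fin n)) ∉ C) :
    ∃ φ : Finset (Fin (n - 1)) → Finset (Fin n),
      Function.Injective φ ∧ (∀ X, φ X ∉ C) ∧
      ∀ X Y, X ⊆ Y ↔ φ X ⊆ φ Y := by
  obtain ⟨m, rfl⟩ : ∃ m, n = m + 1 := ⟨n - 1, (Nat.succ_pred_eq_of_pos hn).symm⟩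
  -- find a coordinate `a` in every member of `C` or in no member of `C`
  have key : ∃ a : Fin (m + 1), (∀ S ∈ C, a ∈ S) ∨ (∀ S ∈ C, a ∉ S) := by
    rcases Set.eq_empty_or_nonempty C with hCe | hCne
    · exact ⟨0, Or.inl (by simp [hCe])⟩
    have hfin : C.Finite := Set.toFinite C
    rcases hend with h0 | hu
    · obtain ⟨S₀, hS₀C, hmin⟩ := Set.Finite.exists_minimalFor id C hfin hCne
      have hle : ∀ S ∈ C, S₀ ⊆ S := by
        intro S hS
        rcases eq_or_ne S S₀ with rfl | hne
        · exact subset_rfl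
        rcases hC hS hS₀C hne with h | h
        · have := hmin hS h; simp only [id] at this; exact this
        · exact h
      have : S₀ ≠ ∅ := fun h => h0 (h ▸ hS₀C)
      obtain ⟨a, ha⟩ := Finset.nonempty_iff_ne_empty.2 this
      exact ⟨a, Or.inl fun S hS => hle S hS ha⟩
    · obtain ⟨S₁, hS₁C, hmax⟩ := Set.Finite.exists_maximalFor id C hfin hCne
      have hle : ∀ S ∈ C, S ⊆ S₁ := by
        intro S hS
        rcases eq_or_ne S S₁ with rfl | hne
        · exact subset_rfl
        rcases hC hS hS₁C hne with h | h
        · exact h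
        · have := hmax hS h; simp only [id] at this; exact this
      have : S₁ ≠ Finset.univ := fun h => hu (h ▸ hS₁C)
      obtain ⟨a, ha⟩ : ∃ a, a ∉ S₁ := by
        by_contra hcon
        push_neg at hcon
        exact this (Finset.eq_univ_iff_forall.2 hcon)
      exact ⟨a, Or.inr fun S hS hc => ha (hle S hS hc)⟩
  obtain ⟨a, hall | hnone⟩ := key
  · -- every member of C contains a; use subsets avoiding a
    refine ⟨fun X => X.map (a.succAboveEmb), ?_, ?_, ?_⟩
    · exact fun X Y h => Finset.map_injective _ h
    · intro X hX
      have := hall _ hX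
      simp only [Finset.mem_map, Fin.succAboveEmb_apply] at this
      obtain ⟨x, _, hx⟩ := this
      exact Fin.succAbove_ne a x hx
    · intro X Y
      exact (Finset.map_subset_map).symm
  · -- no member of C contains a; use subsets containing a
    refine ⟨fun X => insert a (X.map (a.succAboveEmb)), ?_, ?_, ?_⟩
    · intro X Y h
      apply Finset.map_injective (a.succAboveEmb)
      have hX : a ∉ X.map (a.succAboveEmb) := by
        simp only [Finset.mem_map, Fin.succAboveEmb_apply]
        rintro ⟨x, -, hx⟩; exact Fin.succAbove_ne a x hx
      have hY : a ∉ Y.map (a.succAboveEmb) := by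
        simp only [Finset.mem_map, Fin.succAboveEmb_apply]
        rintro ⟨x, -, hx⟩; exact Fin.succAbove_ne a x hx
      have := congrArg (Finset.erase · a) h
      simpa [Finset.erase_insert hX, Finset.erase_insert hY] using this
    · intro X hX
      exact hnone _ hX (Finset.mem_insert_self a _)
    · intro X Y
      constructor
      · intro h
        exact Finset.insert_subset_insert a (Finset.map_subset_map.2 h)
      · intro h x hx
        have hmem : (a.succAboveEmb) x ∈ insert a (Y.map (a.succAboveEmb)) :=
          h (Finset.mem_insert_of_mem (Finset.mem_map_of_mem _ hx))
        rcases Finset.mem_insert.1 hmem with hxa | hxy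
        · exact absurd hxa (Fin.succAbove_ne a x)
        · obtain ⟨y, hy, hyx⟩ := Finset.mem_map.1 hxy
          rwa [← (a.succAboveEmb).injective hyx]
end

section
/- Let $n \ge 1$ and let $\mathbf{A}$ be an antichain of subsets of $[n]$ (a family of subsets pairwise incomparable under inclusion). Then the poset $\mathbf{B}_n - \mathbf{A}$, i.e. the family of all subsets of $[n]$ not in $\mathbf{A}$ ordered by inclusion, contains a copy of the Boolean lattice $\mathbf{B}_{n-1}$ as a subposet; that is, there is an injection $\phi$ from the subsets of $[n-1]$ into the subsets of $[n]$ avoiding $\mathbf{A}$ such that $X \subseteq Y$ if and only if $\phi(X) \subseteq \phi(Y)$. -/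
/-- Removing an antichain from the Boolean lattice `B_n` leaves a copy of `B_{n-1}`. -/
theorem antichain_removal (n : ℕ) (hn : 1 ≤ n) (A : Set (Finset (Fin n)))
    (hA : IsAntichain (· ⊆ ·) A) :
    ∃ φ : Finset (Fin (n - 1)) → Finset (Fin n),
      Function.Injective φ ∧ (∀ X, φ X ∉ A) ∧
      ∀ X Y, X ⊆ Y ↔ φ X ⊆ φ Y := by
  classical
  set e : Fin (n-1) ↪ Fin n := Fin.castLEEmb (Nat.sub_le n 1) with he
  set last : Fin n := ⟨n-1, by omega⟩ with hlast
  have hlast_not : ∀ X : Finset (Fin (n-1)), last ∉ X.map e := by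
    intro X hx
    simp only [Finset.mem_map] at hx
    obtain ⟨a, _, ha⟩ := hx
    have h1 : a.val < n - 1 := a.isLt
    have h2 : (e a : ℕ) = n - 1 := congrArg Fin.val ha
    have h3 : (e a : ℕ) = a.val := rfl
    omega
  set S : Finset (Fin (n-1)) → Prop := fun X => ∃ a ∈ A, a ⊆ X.map e with hS
  set φ : Finset (Fin (n-1)) → Finset (Fin n) :=
    fun X => if S X then insert last (X.map e) else X.map e with hφ
  have herase : ∀ X, (φ X).erase last = X.map e := by
    intro X
    by_cases h : S X <;> simp [hφ, h, Finset.erase_insert (hlast_not X),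
      Finset.erase_eq_of_notMem (hlast_not X)]
  have hsub : ∀ X, X.map e ⊆ φ X ∧ φ X ⊆ insert last (X.map e) := by
    intro X
    by_cases h : S X <;> simp [hφ, h, Finset.subset_insert]
  refine ⟨φ, ?_, ?_, ?_⟩
  · intro X Y hXY
    have : X.map e = Y.map e := by rw [← herase X, ← herase Y, hXY]
    exact Finset.map_injective e this
  · intro X hX
    by_cases h : S X
    · obtain ⟨a, haA, haX⟩ := h
      have hSX : S X := ⟨a, haA, haX⟩
      have hne : a ≠ φ X := by
        intro heq
        have hl : last ∈ φ X := by
          simp only [hφ, if_pos hSX]; exact Finset.mem_insert_self _ _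
        exact hlast_not X (haX (heq ▸ hl))
      have : a ⊆ φ X := haX.trans (hsub X).1
      exact hA haA hX hne this
    · have : φ X = X.map e := by simp [hφ, h]
      exact h ⟨φ X, this ▸ hX, this ▸ Finset.Subset.refl _⟩
  · intro X Y
    constructor
    · intro hXY
      have hmap : X.map e ⊆ Y.map e := Finset.map_subset_map.2 hXY
      by_cases h : S X
      · have hSY : S Y := by
          obtain ⟨a, haA, haX⟩ := h
          exact ⟨a, haA, haX.trans hmap⟩
        simp only [hφ, if_pos h, if_pos hSY]
        exact Finset.insert_subset_insert _ hmap
      · calc φ X = X.map e := by simp [hφ, h]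
          _ ⊆ Y.map e := hmap
          _ ⊆ φ Y := (hsub Y).1
    · intro hφXY
      intro x hx
      have h1 : e x ∈ X.map e := Finset.mem_map_of_mem e hx
      have h2 : e x ∈ φ Y := hφXY ((hsub X).1 h1)
      have h3 : e x ∈ insert last (Y.map e) := (hsub Y).2 h2
      have h4 : e x ≠ last := by
        intro heq
        exact hlast_not X (heq ▸ h1)
      have h5 : e x ∈ Y.map e := by
        rcases Finset.mem_insert.1 h3 with h | h
        · exact absurd h h4
        · exact h
      obtain ⟨y, hy, hey⟩ := Finset.mem_map.1 h5
      exact e.injective hey.symm ▸ hy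
end

section
/- For every $k \ge 1$ and every coloring $c$ of the subsets of $[k+1]$ with $k$ colors, there exists a monochromatic copy of $\mathbf{V}_{1,1}$: three distinct subsets $X, Y, Z$ of $[k+1]$ with $X \subsetneq Y$, $X \subsetneq Z$, $Y \not\subseteq Z$, $Z \not\subseteq Y$, and $c(X)=c(Y)=c(Z)$. (Hence the Boolean Ramsey number satisfies $R_k(\mathbf{V}_{1,1}) \le k+1$.) -/
/-- Every `k`-coloring of the subsets of `[k+1]` contains a monochromatic copy of
`V_{1,1}`: three distinct sets `X ⊊ Y`, `X ⊊ Z` with `Y`, `Z` incomparable,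
all of the same color.  Hence `R_k(V_{1,1}) ≤ k+1`. -/
theorem Rk_V11_upper (k : ℕ) (hk : 1 ≤ k) (c : Finset (Fin (k + 1)) → Fin k) :
    ∃ X Y Z : Finset (Fin (k + 1)),
      X ⊂ Y ∧ X ⊂ Z ∧ ¬Y ⊆ Z ∧ ¬Z ⊆ Y ∧ c Y = c X ∧ c Z = c X := by
  classical
  by_contra hV
  push_neg at hV
  -- hV : ∀ X Y Z, X ⊂ Y → X ⊂ Z → ¬Y ⊆ Z → ¬Z ⊆ Y → c Y = c X → c Z ≠ c X
  -- comparability of same-colored sets strictly above a same-colored bottom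
  have hcomp : ∀ P Y Z : Finset (Fin (k + 1)), P ⊂ Y → P ⊂ Z →
      c Y = c P → c Z = c P → Y ⊆ Z ∨ Z ⊆ Y := by
    intro P Y Z h1 h2 h3 h4
    by_contra hc
    push_neg at hc
    exact hV P Y Z h1 h2 hc.1 hc.2 h3 h4
  -- main induction
  have main : ∀ t : ℕ, t ≤ k → ∃ (P : Finset (Fin (k + 1))) (K : Finset (Fin k)),
      P.card = t ∧ K.card = t ∧
      ∀ S : Finset (Fin (k + 1)), P ⊆ S → S ≠ Finset.univ → c S ∉ K := by
    intro t
    induction t with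
    | zero => exact fun _ => ⟨∅, ∅, by simp, by simp, by simp⟩
    | succ t ih =>
      intro ht
      obtain ⟨P, K, hPc, hKc, hinv⟩ := ih (Nat.le_of_succ_le ht)
      have hPne : P ≠ Finset.univ := by
        intro h
        rw [h, Finset.card_univ, Fintype.card_fin] at hPc
        omega
      -- find N containing P, N ≠ univ, dominating all same-colored strict supersets ≠ univ
      obtain ⟨N, hPN, hNne, hNmax⟩ : ∃ N : Finset (Fin (k + 1)), P ⊆ N ∧
          N ≠ Finset.univ ∧
          ∀ S, P ⊂ S → S ≠ Finset.univ → c S = c P → S ⊆ N := by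
        by_cases hex : ∃ S : Finset (Fin (k + 1)), P ⊂ S ∧ S ≠ Finset.univ ∧ c S = c P
        · -- the family of such S is a chain; take one of maximal cardinality
          set 𝒞 : Finset (Finset (Fin (k + 1))) :=
            Finset.univ.filter (fun S => P ⊂ S ∧ S ≠ Finset.univ ∧ c S = c P) with h𝒞
          have h𝒞ne : 𝒞.Nonempty := by
            obtain ⟨S, hS⟩ := hex
            exact ⟨S, by simp [h𝒞, hS.1, hS.2.1, hS.2.2]⟩
          obtain ⟨N, hN𝒞, hNmaxcard⟩ := Finset.exists_max_image 𝒞 Finset.card h𝒞ne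
          have hNprop : P ⊂ N ∧ N ≠ Finset.univ ∧ c N = c P := by
            simpa [h𝒞] using hN𝒞
          refine ⟨N, hNprop.1.subset, hNprop.2.1, ?_⟩
          intro S hS1 hS2 hS3
          have hS𝒞 : S ∈ 𝒞 := by simp [h𝒞, hS1, hS2, hS3]
          rcases hcomp P S N hS1 hNprop.1 hS3 hNprop.2.2 with h | h
          · exact h
          · have hcard := hNmaxcard S hS𝒞
            exact (Finset.eq_of_subset_of_card_le h hcard).symm.le
        · refine ⟨P, subset_rfl, hPne, ?_⟩
          intro S h1 h2 h3
          exact absurd ⟨S, h1, h2, h3⟩ hex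
      obtain ⟨a, haN⟩ : ∃ a, a ∉ N := by
        by_contra hall
        push_neg at hall
        exact hNne (Finset.eq_univ_iff_forall.mpr hall)
      have haP : a ∉ P := fun h => haN (hPN h)
      have hcP : c P ∉ K := hinv P subset_rfl hPne
      refine ⟨insert a P, insert (c P) K, ?_, ?_, ?_⟩
      · rw [Finset.card_insert_of_notMem haP, hPc]
      · rw [Finset.card_insert_of_notMem hcP, hKc]
      · intro S hsub hne hmem
        have hPS : P ⊆ S := (Finset.subset_insert a P).trans hsub
        rcases Finset.mem_insert.mp hmem with h | h
        · -- c S = c P : then S is in the chain, so S ⊆ N, but a ∈ S, a ∉ N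
          have haS : a ∈ S := hsub (Finset.mem_insert_self a P)
          have hPS' : P ⊂ S := by
            refine Finset.ssubset_iff_subset_ne.mpr ⟨hPS, ?_⟩
            intro e
            exact haP (e ▸ haS)
          exact haN (hNmax S hPS' hne h haS)
        · exact hinv S hPS hne h
  obtain ⟨P, K, hPc, hKc, hinv⟩ := main k le_rfl
  have hKuniv : K = Finset.univ := by
    apply Finset.eq_univ_of_card
    rw [hKc, Fintype.card_fin]
  have hPne : P ≠ Finset.univ := by
    intro h
    rw [h, Finset.card_univ, Fintype.card_fin] at hPc
    omega
  exact hinv P subset_rfl hPne (hKuniv ▸ Finset.mem_univ (c P))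
end

section
/- For all integers $k \ge 1$ and $n \ge m \ge 1$, there exists a coloring of the subsets of $[nk]$ with $k$ colors under which there is no monochromatic copy of $\mathbf{V}_{m,n}$. (Hence the Boolean Ramsey number satisfies $R_k(\mathbf{V}_{m,n}) \ge nk+1$.) Explicitly, one may color each subset $X \ne [nk]$ with color $\lfloor |X|/n \rfloor + 1$ and color $[nk]$ with any color. -/
/-- A copy of `V_{m,n}` in the Boolean lattice on `Fin N`, all of whose sets receive
the color `col` under the coloring `c`: a set `X`, a strictly increasing chain
`Y : Fin m → _` above `X`, a strictly increasing chain `Z : Fin n → _` above `X`,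
with every `Y i` incomparable to every `Z j`. -/
def VCopyColored {N : ℕ} {α : Type*} (m n : ℕ) (c : Finset (Fin N) → α) (col : α) : Prop :=
  ∃ (X : Finset (Fin N)) (Y : Fin m → Finset (Fin N)) (Z : Fin n → Finset (Fin N)),
    StrictMono Y ∧ StrictMono Z ∧ (∀ i, X ⊂ Y i) ∧ (∀ j, X ⊂ Z j) ∧
    (∀ i j, ¬Y i ⊆ Z j ∧ ¬Z j ⊆ Y i) ∧
    c X = col ∧ (∀ i, c (Y i) = col) ∧ (∀ j, c (Z j) = col)

/-- For `k ≥ 1` and `n ≥ m ≥ 1` there is a `k`-coloring of the subsets of `[nk]`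
with no monochromatic copy of `V_{m,n}`.  Hence `R_k(V_{m,n}) ≥ nk + 1`. -/
theorem Rk_Vmn_lower (k m n : ℕ) (hk : 1 ≤ k) (hm : 1 ≤ m) (hmn : m ≤ n) :
    ∃ c : Finset (Fin (n * k)) → Fin k, ¬∃ col, VCopyColored m n c col := by
  have hn : 1 ≤ n := hm.trans hmn
  refine ⟨fun X => ⟨min (X.card / n) (k - 1), by omega⟩, ?_⟩
  rintro ⟨col, X, Y, Z, hY, hZ, hXY, hXZ, hinc, hcX, hcY, hcZ⟩
  -- card bound along the Z chain
  have hcard : ∀ j (h : j < n), X.card + j + 1 ≤ (Z ⟨j, h⟩).card := by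
    intro j
    induction j with
    | zero => intro h; have := Finset.card_lt_card (hXZ ⟨0, h⟩); omega
    | succ j ih =>
      intro h
      have hj : j < n := by omega
      have hlt : (⟨j, hj⟩ : Fin n) < ⟨j + 1, h⟩ := by
        simp [Fin.lt_def]
      have h2 := Finset.card_lt_card (hZ hlt)
      have := ih hj
      omega
  set L : Fin n := ⟨n - 1, by omega⟩ with hL
  have hZL : X.card + n ≤ (Z L).card := by
    have h := hcard (n - 1) (by omega)
    calc X.card + n = X.card + (n - 1) + 1 := by omega
      _ ≤ _ := h
  -- color equality
  have hcol : min (X.card / n) (k - 1) = min ((Z L).card / n) (k - 1) := by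
    have h1 := hcX
    have h2 := hcZ L
    have : (⟨min (X.card / n) (k - 1), by omega⟩ : Fin k)
        = ⟨min ((Z L).card / n) (k - 1), by omega⟩ := h1.trans h2.symm
    simpa using congrArg Fin.val this
  have hdiv : X.card / n + 1 ≤ (Z L).card / n := by
    have h1 : (X.card + n) / n ≤ (Z L).card / n := Nat.div_le_div_right hZL
    rw [Nat.add_div_right _ hn] at h1
    exact h1
  have hXk : k - 1 ≤ X.card / n := by omega
  have hXcard : (k - 1) * n ≤ X.card := (Nat.le_div_iff_mul_le hn).mp hXk
  have hZbig : n * k ≤ (Z L).card := by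
    obtain ⟨k', rfl⟩ := Nat.exists_eq_add_of_le hk
    have he : (1 + k' - 1) * n + n = n * (1 + k') := by
      have : 1 + k' - 1 = k' := by omega
      rw [this]; ring
    omega
  have hZle : (Z L).card ≤ n * k := by
    have := Finset.card_le_univ (Z L)
    simpa using this
  have hZuniv : Z L = Finset.univ :=
    Finset.eq_univ_of_card _ (by simpa using le_antisymm hZle hZbig)
  exact (hinc ⟨0, hm⟩ L).1 (hZuniv ▸ Finset.subset_univ _)
end

section
/- For all integers $m, n \ge 1$ and every coloring of the subsets of $[m+n+1]$ with two colors $1$ and $2$, there exists either a copy of $\mathbf{V}_{m,m}$ all of whose sets have color $1$, or a copy of $\mathbf{V}_{n,n}$ all of whose sets have color $2$. (Hence $R(\mathbf{V}_{m,m},\mathbf{V}_{n,n}) \le m+n+1$.) -/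
namespace VRproof

variable {N : ℕ}

/-- the i-th set of a saturated chain determined by start `a` and list `l`. -/
def chainOf (a : Fin N) (l : List (Fin N)) (i : ℕ) : Finset (Fin N) :=
  insert a (l.take i).toFinset

/-- `l` encodes a saturated maximal chain in the interval `[{a}, univ \ {b}]`;
`K` is the total number of sets in the chain (indices `0,...,K-1`). -/
def SatList (K : ℕ) (a b : Fin N) (l : List (Fin N)) : Prop :=
  l.Nodup ∧ l.length + 1 = K ∧ a ∉ l ∧ b ∉ l

lemma mem_chainOf (a : Fin N) (l : List (Fin N)) (i : ℕ) : a ∈ chainOf a l i :=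
  Finset.mem_insert_self _ _

lemma not_mem_chainOf {a x : Fin N} {l : List (Fin N)} (i : ℕ)
    (hxa : x ≠ a) (hxl : x ∉ l) : x ∉ chainOf a l i := by
  simp only [chainOf, Finset.mem_insert, List.mem_toFinset]
  rintro (h | h)
  · exact hxa h
  · exact hxl (List.take_subset _ _ h)

lemma chainOf_card {a : Fin N} {l : List (Fin N)} {i : ℕ}
    (hnd : l.Nodup) (ha : a ∉ l) (hi : i ≤ l.length) :
    (chainOf a l i).card = i + 1 := by
  have hnd' : (l.take i).Nodup := (List.take_sublist _ _).nodup hnd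
  have ha' : a ∉ (l.take i).toFinset := by
    simp only [List.mem_toFinset]
    exact fun h => ha (List.take_subset _ _ h)
  rw [chainOf, Finset.card_insert_of_notMem ha', List.toFinset_card_of_nodup hnd',
    List.length_take, min_eq_left hi]

lemma chainOf_mono {a : Fin N} {l : List (Fin N)} {i j : ℕ} (hij : i ≤ j) :
    chainOf a l i ⊆ chainOf a l j := by
  apply Finset.insert_subset_insert
  intro x hx
  simp only [List.mem_toFinset] at hx ⊢
  have : l.take i = (l.take j).take i := by rw [List.take_take, min_eq_left hij]
  rw [this] at hx
  exact List.take_subset _ _ hx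

lemma chainOf_ssub {a : Fin N} {l : List (Fin N)} {i j : ℕ}
    (hnd : l.Nodup) (ha : a ∉ l) (hij : i < j) (hj : j ≤ l.length) :
    chainOf a l i ⊂ chainOf a l j := by
  refine (chainOf_mono hij.le).ssubset_of_ne ?_
  intro h
  have h1 := chainOf_card hnd ha (le_trans hij.le hj)
  have h2 := chainOf_card hnd ha hj
  rw [h] at h1
  omega

/-- build a strictly monotone selection from a finset of naturals -/
lemma exists_strictMono_into (t : Finset ℕ) (k : ℕ) (hk : k ≤ t.card) :
    ∃ e : Fin k → ℕ, StrictMono e ∧ ∀ j, e j ∈ t := by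
  obtain ⟨u, hut, huc⟩ := Finset.exists_subset_card_eq hk
  refine ⟨fun j => (u.orderIsoOfFin huc j : ℕ), ?_, fun j => hut (u.orderIsoOfFin huc j).2⟩
  intro i j hij
  exact (u.orderIsoOfFin huc).strictMono hij

lemma fin2_resolve : ∀ (col col' w : Fin 2), col' ≠ col → w ≠ col' → w = col := by decide

lemma fin2_ne : ∀ (col col' w : Fin 2), col' ≠ col → w = col → w ≠ col' := by decide

section Main

variable (p q : ℕ) (c : Finset (Fin N) → Fin 2) (col col' : Fin 2)

/-- Poor pair: some saturated chain in `[{a}, univ \ {b}]` has at most `q` sets of color `col'`. -/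
def Poor (a b : Fin N) : Prop :=
  ∃ l, SatList (p + q) a b l ∧
    ((Finset.range (p + q)).filter (fun i => c (chainOf a l i) = col')).card ≤ q

/-- generic V-copy builder -/
lemma buildV (k : ℕ) (colr : Fin 2) (X : Finset (Fin N)) (hX : c X = colr)
    (u v : Fin N) (Y Z : Fin k → Finset (Fin N))
    (hYm : StrictMono Y) (hZm : StrictMono Z)
    (hY : ∀ i, X ⊂ Y i ∧ u ∈ Y i ∧ v ∉ Y i ∧ c (Y i) = colr)
    (hZ : ∀ i, X ⊂ Z i ∧ v ∈ Z i ∧ u ∉ Z i ∧ c (Z i) = colr) :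
    VCopyColored k k c colr := by
  refine ⟨X, Y, Z, hYm, hZm, fun i => (hY i).1, fun j => (hZ j).1, fun i j => ⟨?_, ?_⟩,
    hX, fun i => (hY i).2.2.2, fun j => (hZ j).2.2.2⟩
  · exact fun hsub => (hZ j).2.2.1 (hsub (hY i).2.1)
  · exact fun hsub => (hY i).2.2.1 (hsub (hZ j).2.1)

variable {p q c col col'}

/-- From a poor pair, extract a `p`-chain ("arm") of `col`-colored sets containing `a`,
avoiding `b`. -/
lemma arm_of_poor (hcc : col' ≠ col) (a b : Fin N) (hab : a ≠ b)
    (hpoor : Poor p q c col' a b) :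
    ∃ Y : Fin p → Finset (Fin N), StrictMono Y ∧
      ∀ i, (∅ ⊂ Y i ∧ a ∈ Y i ∧ b ∉ Y i ∧ c (Y i) = col) := by
  obtain ⟨l, ⟨hnd, hlen, hal, hbl⟩, hones⟩ := hpoor
  set t := (Finset.range (p + q)).filter (fun i => c (chainOf a l i) = col) with ht
  have hsplit := Finset.card_filter_add_card_filter_not
    (s := Finset.range (p + q)) (p := fun i => c (chainOf a l i) = col')
  have hteq : (Finset.range (p + q)).filter (fun i => ¬ c (chainOf a l i) = col') = t := by
    apply Finset.filter_congr
    intro i _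
    constructor
    · intro h; exact fin2_resolve col col' _ hcc h
    · intro h; exact fin2_ne col col' _ hcc h
  rw [hteq] at hsplit
  rw [Finset.card_range] at hsplit
  have htcard : p ≤ t.card := by omega
  obtain ⟨e, hem, het⟩ := exists_strictMono_into t p htcard
  have hmem : ∀ j, e j ∈ Finset.range (p + q) ∧ c (chainOf a l (e j)) = col := by
    intro j
    have := het j
    rw [ht, Finset.mem_filter] at this
    exact this
  refine ⟨fun j => chainOf a l (e j), ?_, ?_⟩
  · intro i j hij
    apply chainOf_ssub hnd hal (hem hij)
    have := (hmem j).1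
    rw [Finset.mem_range] at this
    omega
  · intro i
    refine ⟨?_, mem_chainOf a l _, not_mem_chainOf _ (Ne.symm hab) hbl, (hmem i).2⟩
    exact Finset.empty_ssubset.mpr ⟨a, mem_chainOf a l _⟩

end Main

end VRproof

namespace VRproof

section Rest

variable {N : ℕ} {p q : ℕ} {c : Finset (Fin N) → Fin 2} {col col' : Fin 2}

lemma exists_good_set (hN : N = p + q + 1) (hp : 1 ≤ p) (hq : 1 ≤ q) (hcc : col' ≠ col)
    (a b x : Fin N) (hab : a ≠ b) (hxa : x ≠ a) (hxb : x ≠ b)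
    (hrich : ¬ Poor p q c col' a b) :
    ∃ E : Finset (Fin N), c E = col' ∧ a ∈ E ∧ b ∉ E ∧ x ∉ E := by
  set s := ((Finset.univ : Finset (Fin N)) \ {a, b, x}).sort (· ≤ ·) with hs
  have hmem_s : ∀ y, y ∈ s ↔ (y ≠ a ∧ y ≠ b ∧ y ≠ x) := by
    intro y
    rw [hs, Finset.mem_sort, Finset.mem_sdiff]
    simp only [Finset.mem_univ, true_and, Finset.mem_insert, Finset.mem_singleton]
    tauto
  set l := s ++ [x] with hl
  have hcard3 : ({a, b, x} : Finset (Fin N)).card = 3 := by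
    rw [Finset.card_insert_of_notMem, Finset.card_insert_of_notMem, Finset.card_singleton]
    · simp only [Finset.mem_singleton]; exact hxb.symm
    · simp only [Finset.mem_insert, Finset.mem_singleton]
      push_neg
      exact ⟨hab, hxa.symm⟩
  have hslen : s.length = N - 3 := by
    rw [hs, Finset.length_sort, Finset.card_sdiff_of_subset (Finset.subset_univ _), hcard3,
      Finset.card_univ, Fintype.card_fin]
  have hllen : l.length + 1 = p + q := by
    rw [hl, List.length_append, List.length_singleton]
    omega
  have hxs : x ∉ s := by
    rw [hmem_s]; tauto
  have hsat : SatList (p + q) a b l := by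
    refine ⟨?_, hllen, ?_, ?_⟩
    · rw [hl, List.nodup_append]
      refine ⟨Finset.sort_nodup _ _, List.nodup_singleton x, ?_⟩
      intro y hy₁ z hy₂ hyz
      subst hyz
      rw [List.mem_singleton] at hy₂
      subst hy₂
      exact hxs hy₁
    · intro hmem
      rcases List.mem_append.mp hmem with h | h
      · exact ((hmem_s a).mp h).1 rfl
      · exact hxa (List.mem_singleton.mp h).symm
    · intro hmem
      rcases List.mem_append.mp hmem with h | h
      · exact ((hmem_s b).mp h).2.1 rfl
      · exact hxb (List.mem_singleton.mp h).symm
  set t := (Finset.range (p + q)).filter (fun i => c (chainOf a l i) = col') with ht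
  have hq1 : q + 1 ≤ t.card := by
    by_contra hcon
    push_neg at hcon
    refine hrich ⟨l, hsat, ?_⟩
    rw [← ht]
    omega
  have hex : ∃ i ∈ t, i ≠ p + q - 1 := by
    by_contra hcon
    push_neg at hcon
    have hsub : t ⊆ {p + q - 1} := by
      intro i hi
      rw [Finset.mem_singleton]
      exact hcon i hi
    have := Finset.card_le_card hsub
    rw [Finset.card_singleton] at this
    omega
  obtain ⟨i, hit, hine⟩ := hex
  have hit' := Finset.mem_filter.mp hit
  have hi_range : i < p + q := Finset.mem_range.mp hit'.1
  have hi_le : i ≤ s.length := by omega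
  have htake : l.take i = s.take i := by
    rw [hl]
    exact List.take_append_of_le_length hi_le
  refine ⟨chainOf a l i, hit'.2, mem_chainOf a l i, ?_, ?_⟩
  · exact not_mem_chainOf _ (Ne.symm hab) hsat.2.2.2
  · simp only [chainOf, Finset.mem_insert, List.mem_toFinset]
    push_neg
    refine ⟨hxa, ?_⟩
    rw [htake]
    intro hmem
    exact hxs (List.take_subset _ _ hmem)

lemma exists_min_col' (hcc : col' ≠ col) (E : Finset (Fin N)) (hE : c E = col')
    (a : Fin N) (haE : a ∈ E) :
    ∃ D : Finset (Fin N), D ⊆ E ∧ a ∈ D ∧ c D = col' ∧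
      ∀ S, a ∈ S → S ⊂ D → c S = col := by
  set fam := E.powerset.filter (fun S => a ∈ S ∧ c S = col') with hfam
  have hne : fam.Nonempty := by
    refine ⟨E, ?_⟩
    rw [hfam, Finset.mem_filter, Finset.mem_powerset]
    exact ⟨Finset.Subset.refl E, haE, hE⟩
  obtain ⟨D, hDmem, hmin⟩ := fam.exists_min_image Finset.card hne
  rw [hfam, Finset.mem_filter, Finset.mem_powerset] at hDmem
  refine ⟨D, hDmem.1, hDmem.2.1, hDmem.2.2, ?_⟩
  intro S haS hSD
  by_contra hS
  have hScol : c S = col' := fin2_resolve col' col _ (Ne.symm hcc) hS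
  have hSfam : S ∈ fam := by
    rw [hfam, Finset.mem_filter, Finset.mem_powerset]
    exact ⟨hSD.subset.trans hDmem.1, haS, hScol⟩
  have h1 := hmin S hSfam
  have h2 := Finset.card_lt_card hSD
  omega

lemma arm_over (hN : N = p + q + 1) (hp : 1 ≤ p) (hq : 1 ≤ q) (hcc : col' ≠ col)
    (D : Finset (Fin N)) (a : Fin N) (haD : a ∈ D)
    (hground : ∀ S, a ∈ S → S ⊂ D → c S = col)
    (b b' : Fin N) (hbD : b ∉ D) (hb'D : b' ∉ D) (hbb' : b ≠ b')
    (hrich : ¬ Poor p q c col' a b) :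
    ∃ Y : Fin q → Finset (Fin N), StrictMono Y ∧
      ∀ i, D ⊂ Y i ∧ b' ∈ Y i ∧ b ∉ Y i ∧ c (Y i) = col' := by
  set d := D.card with hd
  have hd1 : 1 ≤ d := Finset.card_pos.mpr ⟨a, haD⟩
  set s₁ := (D.erase a).sort (· ≤ ·) with hs₁
  set B := insert b (insert b' D) with hB
  set s₂ := ((Finset.univ : Finset (Fin N)) \ B).sort (· ≤ ·) with hs₂
  set l := s₁ ++ b' :: s₂ with hl
  have hmem_s₁ : ∀ y, y ∈ s₁ ↔ y ∈ D.erase a := fun y => Finset.mem_sort _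
  have hmem_s₂ : ∀ y, y ∈ s₂ ↔ y ∉ B := by
    intro y
    rw [hs₂, Finset.mem_sort, Finset.mem_sdiff]
    simp only [Finset.mem_univ, true_and]
  have hlen₁ : s₁.length + 1 = d := by
    rw [hs₁, Finset.length_sort, Finset.card_erase_of_mem haD]
    omega
  have hcardB : B.card = d + 2 := by
    rw [hB, Finset.card_insert_of_notMem, Finset.card_insert_of_notMem hb'D, ← hd]
    simp only [Finset.mem_insert]
    push_neg
    exact ⟨hbb', hbD⟩
  have hBle : B.card ≤ N := by
    have := Finset.card_le_univ B
    rwa [Fintype.card_fin] at this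
  have hlen₂ : s₂.length = N - (d + 2) := by
    rw [hs₂, Finset.length_sort, Finset.card_sdiff_of_subset (Finset.subset_univ _), hcardB,
      Finset.card_univ, Fintype.card_fin]
  have hllen : l.length + 1 = p + q := by
    rw [hl, List.length_append, List.length_cons]
    omega
  have haD' : ∀ y ∈ D, y ∉ B → False := by
    intro y hy hyB
    exact hyB (by rw [hB]; exact Finset.mem_insert_of_mem (Finset.mem_insert_of_mem hy))
  have hsat : SatList (p + q) a b l := by
    refine ⟨?_, hllen, ?_, ?_⟩
    · rw [hl, List.nodup_append]
      refine ⟨Finset.sort_nodup _ _, ?_, ?_⟩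
      · rw [List.nodup_cons]
        refine ⟨?_, Finset.sort_nodup _ _⟩
        rw [hmem_s₂]
        intro h
        exact h (by rw [hB]; exact Finset.mem_insert_of_mem (Finset.mem_insert_self _ _))
      · intro y hy₁ z hy₂ hyz
        subst hyz
        have hyD : y ∈ D := Finset.mem_of_mem_erase ((hmem_s₁ y).mp hy₁)
        rcases List.mem_cons.mp hy₂ with h | h
        · subst h; exact hb'D hyD
        · exact haD' y hyD ((hmem_s₂ y).mp h)
    · intro hmem
      rcases List.mem_append.mp hmem with h | h
      · exact Finset.notMem_erase a D ((hmem_s₁ a).mp h)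
      · rcases List.mem_cons.mp h with h' | h'
        · subst h'; exact hb'D haD
        · exact haD' a haD ((hmem_s₂ a).mp h')
    · intro hmem
      rcases List.mem_append.mp hmem with h | h
      · exact hbD (Finset.mem_of_mem_erase ((hmem_s₁ b).mp h))
      · rcases List.mem_cons.mp h with h' | h'
        · exact hbb' h'
        · exact ((hmem_s₂ b).mp h') (by rw [hB]; exact Finset.mem_insert_self _ _)
  set t := (Finset.range (p + q)).filter (fun i => c (chainOf a l i) = col') with ht
  have hq1 : q + 1 ≤ t.card := by
    by_contra hcon
    push_neg at hcon
    refine hrich ⟨l, hsat, ?_⟩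
    rw [← ht]
    omega
  -- indices below d: only possibly d - 1 is in t
  have hlow : t.filter (fun i => i < d) ⊆ {d - 1} := by
    intro i hi
    rw [Finset.mem_filter] at hi
    obtain ⟨hit, hid⟩ := hi
    rw [ht, Finset.mem_filter, Finset.mem_range] at hit
    rw [Finset.mem_singleton]
    by_contra hne
    have hile : i ≤ s₁.length := by omega
    have htake : l.take i = s₁.take i := by
      rw [hl]; exact List.take_append_of_le_length hile
    have hsub : chainOf a l i ⊆ D := by
      intro y hy
      rcases Finset.mem_insert.mp hy with h | h
      · subst h; exact haD
      · rw [List.mem_toFinset, htake] at h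
        exact Finset.mem_of_mem_erase ((hmem_s₁ y).mp (List.take_subset _ _ h))
    have hcard : (chainOf a l i).card = i + 1 :=
      chainOf_card hsat.1 hsat.2.2.1 (by omega)
    have hss : chainOf a l i ⊂ D := by
      refine hsub.ssubset_of_ne ?_
      intro h
      rw [h] at hcard
      omega
    have := hground _ (mem_chainOf a l i) hss
    rw [this] at hit
    exact hcc hit.2.symm
  have hlowcard : (t.filter (fun i => i < d)).card ≤ 1 := by
    have := Finset.card_le_card hlow
    rwa [Finset.card_singleton] at this
  have hsplit := Finset.card_filter_add_card_filter_not
    (s := t) (p := fun i => i < d)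
  have hhigh : q ≤ (t.filter (fun i => ¬ i < d)).card := by omega
  obtain ⟨e, hem, het⟩ := exists_strictMono_into _ q hhigh
  have hprops : ∀ j, d ≤ e j ∧ e j < p + q ∧ c (chainOf a l (e j)) = col' := by
    intro j
    have h1 := het j
    rw [Finset.mem_filter] at h1
    have h2 := h1.1
    rw [ht, Finset.mem_filter, Finset.mem_range] at h2
    exact ⟨by omega, h2.1, h2.2⟩
  have hkey : ∀ i, d ≤ i → i < p + q →
      (D ⊂ chainOf a l i ∧ b' ∈ chainOf a l i ∧ b ∉ chainOf a l i) := by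
    intro i hdi hipq
    have htake : l.take i = s₁ ++ (b' :: s₂).take (i - s₁.length) := by
      rw [hl, List.take_append, List.take_of_length_le (by omega)]
    have hpos : 1 ≤ i - s₁.length := by omega
    obtain ⟨k, hk⟩ : ∃ k, i - s₁.length = k + 1 := ⟨i - s₁.length - 1, by omega⟩
    have hb'mem : b' ∈ chainOf a l i := by
      simp only [chainOf, Finset.mem_insert, List.mem_toFinset]
      right
      rw [htake, hk, List.take_succ_cons]
      exact List.mem_append_right _ List.mem_cons_self
    have hDsub : D ⊆ chainOf a l i := by
      intro y hy
      by_cases hya : y = a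
      · rw [hya]; exact mem_chainOf a l i
      · simp only [chainOf, Finset.mem_insert, List.mem_toFinset]
        right
        rw [htake]
        refine List.mem_append_left _ ?_
        rw [hmem_s₁]
        exact Finset.mem_erase.mpr ⟨hya, hy⟩
    refine ⟨Finset.ssubset_iff_of_subset hDsub |>.mpr ⟨b', hb'mem, hb'D⟩, hb'mem, ?_⟩
    exact not_mem_chainOf _ (fun h => hbD (h ▸ haD)) hsat.2.2.2
  refine ⟨fun j => chainOf a l (e j), ?_, ?_⟩
  · intro i j hij
    exact chainOf_ssub hsat.1 hsat.2.2.1 (hem hij) (by have := (hprops j).2.1; omega)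
  · intro j
    obtain ⟨h1, h2, h3⟩ := hprops j
    obtain ⟨k1, k2, k3⟩ := hkey (e j) h1 h2
    exact ⟨k1, k2, k3, h3⟩

lemma not_poor_or (hcc : col' ≠ col) (hc0 : c ∅ = col) (hA : ¬ VCopyColored p p c col)
    (a b : Fin N) (hab : a ≠ b) :
    ¬ Poor p q c col' a b ∨ ¬ Poor p q c col' b a := by
  by_cases h1 : Poor p q c col' a b
  · right
    intro h2
    obtain ⟨Y, hYm, hY⟩ := arm_of_poor hcc a b hab h1
    obtain ⟨Z, hZm, hZ⟩ := arm_of_poor hcc b a (Ne.symm hab) h2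
    exact hA (buildV c p col ∅ hc0 a b Y Z hYm hZm hY hZ)
  · left; exact h1

lemma double_rich (hN : N = p + q + 1) (hp : 1 ≤ p) (hq : 1 ≤ q) (hcc : col' ≠ col)
    (hB : ¬ VCopyColored q q c col')
    (a b b' : Fin N) (hab : a ≠ b) (hab' : a ≠ b') (hbb' : b ≠ b')
    (h1 : ¬ Poor p q c col' a b) (h2 : ¬ Poor p q c col' a b') : False := by
  obtain ⟨E, hE, haE, hbE, hb'E⟩ :=
    exists_good_set hN hp hq hcc a b b' hab (Ne.symm hab') hbb'.symm h1
  obtain ⟨D, hDE, haD, hD, hground⟩ := exists_min_col' hcc E hE a haE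
  have hbD : b ∉ D := fun h => hbE (hDE h)
  have hb'D : b' ∉ D := fun h => hb'E (hDE h)
  obtain ⟨Y, hYm, hY⟩ := arm_over hN hp hq hcc D a haD hground b b' hbD hb'D hbb' h1
  obtain ⟨Z, hZm, hZ⟩ := arm_over hN hp hq hcc D a haD hground b' b hb'D hbD hbb'.symm h2
  refine hB (buildV c q col' D hD b' b Y Z hYm hZm ?_ ?_)
  · intro i; obtain ⟨k1, k2, k3, k4⟩ := hY i; exact ⟨k1, k2, k3, k4⟩
  · intro j; obtain ⟨k1, k2, k3, k4⟩ := hZ j; exact ⟨k1, k2, k3, k4⟩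

end Rest

section Endgame

variable {c : Finset (Fin (1+1+1)) → Fin 2} {col col' : Fin 2}

lemma rich_pair (hcc : col' ≠ col) (a b z : Fin (1+1+1)) (hab : a ≠ b) (hza : z ≠ a)
    (hzb : z ≠ b) (hr : ¬ Poor 1 1 c col' a b) :
    c {a} = col' ∧ c ({a, z}) = col' := by
  have hsat : SatList (1+1) a b [z] := by
    refine ⟨List.nodup_singleton z, by simp, ?_, ?_⟩
    · rw [List.mem_singleton]; exact fun h => hza h.symm
    · rw [List.mem_singleton]; exact fun h => hzb h.symm
  set t := (Finset.range (1+1)).filter (fun i => c (chainOf a [z] i) = col') with ht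
  have h2 : 2 ≤ t.card := by
    by_contra hcon
    push_neg at hcon
    refine hr ⟨[z], hsat, ?_⟩
    rw [← ht]
    omega
  have hteq : t = Finset.range (1+1) := by
    refine Finset.eq_of_subset_of_card_le (Finset.filter_subset _ _) ?_
    rw [Finset.card_range]
    omega
  have h0 : (0 : ℕ) ∈ t := by rw [hteq]; simp
  have h1 : (1 : ℕ) ∈ t := by rw [hteq]; simp
  rw [ht, Finset.mem_filter] at h0 h1
  constructor
  · have := h0.2
    rwa [show chainOf a [z] 0 = {a} by simp [chainOf]] at this
  · have := h1.2
    rwa [show chainOf a [z] 1 = {a, z} by simp [chainOf]] at this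

lemma endgame (hcc : col' ≠ col) (hB : ¬ VCopyColored 1 1 c col')
    (tot : ∀ a b : Fin (1+1+1), a ≠ b → ¬ Poor 1 1 c col' a b ∨ ¬ Poor 1 1 c col' b a)
    (uniq : ∀ a b b' : Fin (1+1+1), a ≠ b → a ≠ b' → b ≠ b' →
      ¬ Poor 1 1 c col' a b → ¬ Poor 1 1 c col' a b' → False) : False := by
  have outs : ∀ a : Fin (1+1+1), ∃ b, b ≠ a ∧ ¬ Poor 1 1 c col' a b := by
    intro a
    by_contra hcon
    push_neg at hcon
    obtain ⟨u, v, huv, hua, hva⟩ :=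
      (by decide : ∀ a : Fin (1+1+1), ∃ u v : Fin (1+1+1), u ≠ v ∧ u ≠ a ∧ v ≠ a) a
    have hru : ¬ Poor 1 1 c col' u a := by
      rcases tot u a hua with h | h
      · exact h
      · exact absurd (hcon u hua) h
    have hrv : ¬ Poor 1 1 c col' v a := by
      rcases tot v a hva with h | h
      · exact h
      · exact absurd (hcon v hva) h
    rcases tot u v huv with h | h
    · exact uniq u a v hua huv (Ne.symm hva) hru h
    · exact uniq v a u hva (Ne.symm huv) (Ne.symm hua) hrv h
  have pairs : ∀ a b : Fin (1+1+1), a ≠ b → c {a, b} = col' := by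
    intro a b hab
    obtain ⟨z, hza, hzb⟩ :=
      (by decide : ∀ a b : Fin (1+1+1), a ≠ b → ∃ z : Fin (1+1+1), z ≠ a ∧ z ≠ b) a b hab
    have hor : ¬ Poor 1 1 c col' a z ∨ ¬ Poor 1 1 c col' b z := by
      by_contra hcon
      push_neg at hcon
      have h1 : ¬ Poor 1 1 c col' z a := by
        rcases tot a z (Ne.symm hza) with h | h
        · exact absurd hcon.1 h
        · exact h
      have h2 : ¬ Poor 1 1 c col' z b := by
        rcases tot b z (Ne.symm hzb) with h | h
        · exact absurd hcon.2 h
        · exact h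
      exact uniq z a b hza hzb hab h1 h2
    rcases hor with h | h
    · exact (rich_pair hcc a z b (Ne.symm hza) (Ne.symm hab) (Ne.symm hzb) h).2
    · rw [Finset.pair_comm]
      exact (rich_pair hcc b z a (Ne.symm hzb) hab (Ne.symm hza) h).2
  have singles : ∀ a : Fin (1+1+1), c {a} = col' := by
    intro a
    obtain ⟨b, hba, hr⟩ := outs a
    obtain ⟨z, hza, hzb⟩ :=
      (by decide : ∀ a b : Fin (1+1+1), a ≠ b → ∃ z : Fin (1+1+1), z ≠ a ∧ z ≠ b)
        a b (Ne.symm hba)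
    exact (rich_pair hcc a b z (Ne.symm hba) hza hzb hr).1
  have mono1 : ∀ f : Fin 1 → Finset (Fin (1+1+1)), StrictMono f := by
    intro f i j hij
    exact absurd (Subsingleton.elim i j) (ne_of_lt hij)
  refine hB (buildV c 1 col' {(0 : Fin (1+1+1))} (singles 0) 1 2
    (fun _ => {0, 1}) (fun _ => {0, 2}) (mono1 _) (mono1 _) ?_ ?_)
  · intro i
    refine ⟨?_, ?_, ?_, pairs 0 1 (by decide)⟩
    · show ({0} : Finset (Fin (1+1+1))) ⊂ {0, 1}
      decide
    · show (1 : Fin (1+1+1)) ∈ ({0, 1} : Finset (Fin (1+1+1)))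
      decide
    · show (2 : Fin (1+1+1)) ∉ ({0, 1} : Finset (Fin (1+1+1)))
      decide
  · intro j
    refine ⟨?_, ?_, ?_, pairs 0 2 (by decide)⟩
    · show ({0} : Finset (Fin (1+1+1))) ⊂ {0, 2}
      decide
    · show (2 : Fin (1+1+1)) ∈ ({0, 2} : Finset (Fin (1+1+1)))
      decide
    · show (1 : Fin (1+1+1)) ∉ ({0, 2} : Finset (Fin (1+1+1)))
      decide

end Endgame

section MainThm

theorem main_contra {N p q : ℕ} {c : Finset (Fin N) → Fin 2} {col col' : Fin 2}
    (hN : N = p + q + 1) (hp : 1 ≤ p) (hq : 1 ≤ q) (hcc : col' ≠ col)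
    (hc0 : c ∅ = col) (hA : ¬ VCopyColored p p c col)
    (hB : ¬ VCopyColored q q c col') : False := by
  have tot : ∀ a b : Fin N, a ≠ b → ¬ Poor p q c col' a b ∨ ¬ Poor p q c col' b a :=
    fun a b hab => not_poor_or hcc hc0 hA a b hab
  have uniq : ∀ a b b' : Fin N, a ≠ b → a ≠ b' → b ≠ b' →
      ¬ Poor p q c col' a b → ¬ Poor p q c col' a b' → False :=
    fun a b b' h1 h2 h3 h4 h5 => double_rich hN hp hq hcc hB a b b' h1 h2 h3 h4 h5
  rcases Nat.lt_or_ge (p + q) 3 with hK | hK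
  · have hp1 : p = 1 := by omega
    have hq1 : q = 1 := by omega
    subst hp1
    subst hq1
    subst hN
    exact endgame hcc hB tot uniq
  · have h4 : 4 ≤ N := by omega
    obtain ⟨x0, x1, x2, x3, d01, d02, d03, d12, d13, d23⟩ :
        ∃ x0 x1 x2 x3 : Fin N, x0 ≠ x1 ∧ x0 ≠ x2 ∧ x0 ≠ x3 ∧ x1 ≠ x2 ∧ x1 ≠ x3 ∧ x2 ≠ x3 :=
      ⟨⟨0, by omega⟩, ⟨1, by omega⟩, ⟨2, by omega⟩, ⟨3, by omega⟩,
        by simp [Fin.ext_iff], by simp [Fin.ext_iff], by simp [Fin.ext_iff],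
        by simp [Fin.ext_iff], by simp [Fin.ext_iff], by simp [Fin.ext_iff]⟩
    have hA2 : ∀ u v : Fin N, u ≠ v → u ≠ x0 → v ≠ x0 →
        Poor p q c col' x0 u → Poor p q c col' x0 v → False := by
      intro u v huv hux0 hvx0 hpu hpv
      have hu : ¬ Poor p q c col' u x0 := by
        rcases tot x0 u (Ne.symm hux0) with h | h
        · exact absurd hpu h
        · exact h
      have hv : ¬ Poor p q c col' v x0 := by
        rcases tot x0 v (Ne.symm hvx0) with h | h
        · exact absurd hpv h
        · exact h
      rcases tot u v huv with h | h
      · exact uniq u x0 v hux0 huv (Ne.symm hvx0) hu h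
      · exact uniq v x0 u hvx0 (Ne.symm huv) (Ne.symm hux0) hv h
    have hB2 : ∀ u v : Fin N, x0 ≠ u → x0 ≠ v → u ≠ v →
        ¬ Poor p q c col' x0 u → ¬ Poor p q c col' x0 v → False :=
      fun u v h1 h2 h3 h4 h5 => uniq x0 u v h1 h2 h3 h4 h5
    by_cases r1 : Poor p q c col' x0 x1
    · by_cases r2 : Poor p q c col' x0 x2
      · exact hA2 x1 x2 d12 (Ne.symm d01) (Ne.symm d02) r1 r2
      · by_cases r3 : Poor p q c col' x0 x3
        · exact hA2 x1 x3 d13 (Ne.symm d01) (Ne.symm d03) r1 r3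
        · exact hB2 x2 x3 d02 d03 d23 r2 r3
    · by_cases r2 : Poor p q c col' x0 x2
      · by_cases r3 : Poor p q c col' x0 x3
        · exact hA2 x2 x3 d23 (Ne.symm d02) (Ne.symm d03) r2 r3
        · exact hB2 x1 x3 d01 d03 d13 r1 r3
      · exact hB2 x1 x2 d01 d02 d12 r1 r2

end MainThm

end VRproof


/-- Every `2`-coloring (colors `0` and `1`) of the subsets of `[m+n+1]` contains a
copy of `V_{m,m}` in color `0` or a copy of `V_{n,n}` in color `1`.
Hence `R(V_{m,m}, V_{n,n}) ≤ m + n + 1`. -/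
theorem R_Vmm_Vnn_upper (m n : ℕ) (hm : 1 ≤ m) (hn : 1 ≤ n)
    (c : Finset (Fin (m + n + 1)) → Fin 2) :
    VCopyColored m m c 0 ∨ VCopyColored n n c 1 := by
  by_contra hcon
  push_neg at hcon
  obtain ⟨hA, hB⟩ := hcon
  rcases (by omega : c ∅ = 0 ∨ c ∅ = 1) with hc0 | hc0
  · exact VRproof.main_contra rfl hm hn (by decide : (1 : Fin 2) ≠ 0) hc0 hA hB
  · exact VRproof.main_contra (by omega : m + n + 1 = n + m + 1) hn hm
      (by decide : (0 : Fin 2) ≠ 1) hc0 hB hA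
end

section
/- For all integers $m, n \ge 1$, there exists a coloring of the subsets of $[m+n]$ with two colors $1$ and $2$ under which no copy of $\mathbf{V}_{m,m}$ has all sets of color $1$ and no copy of $\mathbf{V}_{n,n}$ has all sets of color $2$. Explicitly, color $X$ with $1$ if $0 \le |X| < m$ and with $2$ if $m \le |X| \le m+n$. (Hence $R(\mathbf{V}_{m,m},\mathbf{V}_{n,n}) \ge m+n+1$, and combined with the upper bound, $R(\mathbf{V}_{m,m},\mathbf{V}_{n,n}) = m+n+1$.) -/
lemma strictMono_fin_le {k : ℕ} (f : Fin k → ℕ) (hf : StrictMono f) (i : Fin k) :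
    f ⟨0, (Nat.zero_le _).trans_lt i.2⟩ + i.1 ≤ f i := by
  obtain ⟨v, hv⟩ := i
  induction v with
  | zero => simp
  | succ v ih =>
    have h1 : f ⟨v, Nat.lt_of_succ_lt hv⟩ < f ⟨v + 1, hv⟩ := hf (by simp)
    have := ih (Nat.lt_of_succ_lt hv)
    simp only [Fin.val_mk] at *
    omega

lemma chain_card_le {N k : ℕ} (Y : Fin k → Finset (Fin N)) (hY : StrictMono Y) (i : Fin k) :
    (Y ⟨0, (Nat.zero_le _).trans_lt i.2⟩).card + i.1 ≤ (Y i).card := by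
  exact strictMono_fin_le (fun j => (Y j).card)
    (fun a b hab => Finset.card_lt_card (hY hab)) i

/-- There is a `2`-coloring (colors `0` and `1`) of the subsets of `[m+n]` admitting
no copy of `V_{m,m}` in color `0` and no copy of `V_{n,n}` in color `1`.
Hence `R(V_{m,m}, V_{n,n}) ≥ m + n + 1`. -/
theorem R_Vmm_Vnn_lower (m n : ℕ) (hm : 1 ≤ m) (hn : 1 ≤ n) :
    ∃ c : Finset (Fin (m + n)) → Fin 2,
      ¬VCopyColored m m c 0 ∧ ¬VCopyColored n n c 1 := by
  refine ⟨fun X => if X.card < m then 0 else 1, ?_, ?_⟩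
  · rintro ⟨X, Y, Z, hY, hZ, hXY, hXZ, hinc, hcX, hcY, hcZ⟩
    have hcard0 : X.card < (Y ⟨0, by omega⟩).card :=
      Finset.card_lt_card (hXY _)
    have hchain := chain_card_le Y hY ⟨m - 1, by omega⟩
    have hYc : (Y ⟨m - 1, by omega⟩).card < m := by
      have h := hcY ⟨m - 1, by omega⟩
      by_contra hc
      simp only [if_neg hc] at h
      exact absurd h (by decide)
    simp only [Fin.val_mk] at *
    omega
  · rintro ⟨X, Y, Z, hY, hZ, hXY, hXZ, hinc, hcX, hcY, hcZ⟩
    have hXm : ¬ X.card < m := by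
      intro h; simp only [if_pos h] at hcX; exact absurd hcX (by decide)
    have hcard0 : X.card < (Y ⟨0, by omega⟩).card :=
      Finset.card_lt_card (hXY _)
    have hchain := chain_card_le Y hY ⟨n - 1, by omega⟩
    simp only [Fin.mk_zero] at hchain
    have hle : (Y ⟨n - 1, by omega⟩).card ≤ m + n := by
      simpa using Finset.card_le_card (Finset.subset_univ (Y ⟨n - 1, by omega⟩))
    have heq : (Y ⟨n - 1, by omega⟩).card = m + n := by omega
    have huniv : Y ⟨n - 1, by omega⟩ = Finset.univ :=
      Finset.eq_univ_of_card _ (by simpa using heq)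
    exact (hinc ⟨n - 1, by omega⟩ ⟨0, by omega⟩).2 (huniv ▸ Finset.subset_univ _)
end

section
/- For every $k \ge 1$ and every coloring of the family $\mathbf{B}_{k+1} - \{[k+1]\}$ (all subsets of $[k+1]$ except $[k+1]$ itself) with $k$ colors, there exists a monochromatic copy of $\mathbf{V}_{1,1}$: three distinct subsets $X, Y, Z \ne [k+1]$ of $[k+1]$ with $X \subsetneq Y$, $X \subsetneq Z$, $Y \not\subseteq Z$, $Z \not\subseteq Y$, all receiving the same color. -/
private lemma ramsey_aux : ∀ k : ℕ, 1 ≤ k → ∀ c : Finset (Fin (k + 1)) → Fin k,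
    ∃ X Y Z : Finset (Fin (k + 1)),
      X ≠ Finset.univ ∧ Y ≠ Finset.univ ∧ Z ≠ Finset.univ ∧
      X ⊂ Y ∧ X ⊂ Z ∧ ¬Y ⊆ Z ∧ ¬Z ⊆ Y ∧ c Y = c X ∧ c Z = c X := by
  intro k
  induction k with
  | zero => omega
  | succ n ih =>
    intro _ c
    by_cases hn : n = 0
    · subst hn
      exact ⟨∅, {0}, {1}, by decide, by decide, by decide, by decide, by decide,
        by decide, by decide, (Fin.fin_one_eq_zero _).trans (Fin.fin_one_eq_zero _).symm,
        (Fin.fin_one_eq_zero _).trans (Fin.fin_one_eq_zero _).symm⟩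
    have hn1 : 1 ≤ n := Nat.one_le_iff_ne_zero.2 hn
    set a := c ∅ with ha
    by_cases h : ∃ Y Z : Finset (Fin (n + 2)), Y ≠ Finset.univ ∧ Z ≠ Finset.univ ∧
        Y ≠ ∅ ∧ Z ≠ ∅ ∧ ¬Y ⊆ Z ∧ ¬Z ⊆ Y ∧ c Y = a ∧ c Z = a
    · obtain ⟨Y, Z, hYu, hZu, hY0, hZ0, hYZ, hZY, hcY, hcZ⟩ := h
      have hEu : (∅ : Finset (Fin (n + 2))) ≠ Finset.univ :=
        fun hh => hY0 (by simpa [hh] using Finset.subset_univ Y |>.antisymm (hh ▸ Finset.empty_subset _) |>.symm ▸ rfl)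
      refine ⟨∅, Y, Z, ?_, hYu, hZu, ?_, ?_, hYZ, hZY, hcY, hcZ⟩
      · exact (Finset.univ_nonempty.ne_empty).symm
      · exact Finset.empty_ssubset.2 (Finset.nonempty_iff_ne_empty.2 hY0)
      · exact Finset.empty_ssubset.2 (Finset.nonempty_iff_ne_empty.2 hZ0)
    · push_neg at h
      -- find x such that every proper set containing x avoids color a
      have hx : ∃ x : Fin (n + 2), ∀ S : Finset (Fin (n + 2)),
          x ∈ S → S ≠ Finset.univ → c S ≠ a := by
        classical
        set F : Finset (Finset (Fin (n + 2))) :=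
          Finset.univ.filter (fun S => S ≠ Finset.univ ∧ S ≠ ∅ ∧ c S = a) with hF
        rcases F.eq_empty_or_nonempty with hFe | hFne
        · refine ⟨0, fun S hxS hSu hcS => ?_⟩
          have : S ∈ F := by
            simp only [hF, Finset.mem_filter, Finset.mem_univ, true_and]
            exact ⟨hSu, fun h0 => by simp [h0] at hxS, hcS⟩
          simp [hFe] at this
        · obtain ⟨S0, hS0F, hS0max⟩ := F.exists_max_image Finset.card hFne
          have hS0 : S0 ≠ Finset.univ ∧ S0 ≠ ∅ ∧ c S0 = a := by
            simpa [hF] using hS0F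
          have hsub : ∀ S ∈ F, S ⊆ S0 := by
            intro S hSF
            have hS : S ≠ Finset.univ ∧ S ≠ ∅ ∧ c S = a := by simpa [hF] using hSF
            by_cases hcmp : S ⊆ S0
            · exact hcmp
            by_cases hcmp2 : S0 ⊆ S
            · have : S = S0 :=
                (Finset.eq_of_subset_of_card_le hcmp2 (hS0max S hSF)).symm
              exact this ▸ Finset.Subset.refl _
            · exact absurd hS0.2.2 (h S S0 hS.1 hS0.1 (Finset.nonempty_iff_ne_empty.2 hS.2.1) (Finset.nonempty_iff_ne_empty.2 hS0.2.1) hcmp hcmp2 hS.2.2)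
          obtain ⟨x, hxS0⟩ : ∃ x, x ∉ S0 := by
            by_contra hc
            push_neg at hc
            exact hS0.1 (Finset.eq_univ_iff_forall.2 hc)
          refine ⟨x, fun S hxS hSu hcS => ?_⟩
          have hSF : S ∈ F := by
            simp only [hF, Finset.mem_filter, Finset.mem_univ, true_and]
            exact ⟨hSu, fun h0 => by simp [h0] at hxS, hcS⟩
          exact hxS0 (hsub S hSF hxS)
      obtain ⟨x, hx⟩ := hx
      -- embed B_{n+1} into the sets containing x
      set e : Fin (n + 1) ↪ Fin (n + 2) :=
        ⟨x.succAbove, Fin.succAbove_right_injective⟩ with he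
      have hex : ∀ i, e i ≠ x := fun i => Fin.succAbove_ne x i
      set φ : Finset (Fin (n + 1)) → Finset (Fin (n + 2)) :=
        fun T => insert x (T.map e) with hφ
      have hxnm : ∀ T : Finset (Fin (n + 1)), x ∉ T.map e := by
        intro T hmem
        obtain ⟨t, _, het⟩ := Finset.mem_map.1 hmem
        exact hex t het
      have hφsub : ∀ T T' : Finset (Fin (n + 1)), φ T ⊆ φ T' ↔ T ⊆ T' := by
        intro T T'
        constructor
        · intro hsub t ht
          have : e t ∈ φ T' := hsub (Finset.mem_insert_of_mem (Finset.mem_map_of_mem e ht))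
          rcases Finset.mem_insert.1 this with heq | hmem
          · exact absurd heq (hex t)
          · obtain ⟨t', ht', het'⟩ := Finset.mem_map.1 hmem
            rwa [← e.injective het']
        · intro hsub
          exact Finset.insert_subset_insert x (Finset.map_subset_map.2 hsub)
      have hφcard : ∀ T : Finset (Fin (n + 1)), (φ T).card = T.card + 1 := by
        intro T
        rw [hφ]
        simp only
        rw [Finset.card_insert_of_notMem (hxnm T), Finset.card_map]
      have hφu : ∀ T : Finset (Fin (n + 1)), T ≠ Finset.univ → φ T ≠ Finset.univ := by
        intro T hT hcon
        have h1 : T.card < n + 1 := by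
          have := Finset.card_lt_card (Finset.ssubset_univ_iff.2 hT)
          simpa using this
        have h2 : (φ T).card = n + 2 := by rw [hcon]; simp
        rw [hφcard T] at h2
        omega
      have hφa : ∀ T : Finset (Fin (n + 1)), T ≠ Finset.univ → c (φ T) ≠ a := by
        intro T hT
        exact hx (φ T) (Finset.mem_insert_self x _) (hφu T hT)
      -- collapse colors: ρ injective away from a
      set ρ : Fin (n + 1) → Fin n := fun b =>
        if hba : b.val < a.val then ⟨b.val, by have := a.isLt; omega⟩ else ⟨b.val - 1, by
          have h1 := b.isLt; have h2 := hn1; omega⟩ with hρ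
      have hρinj : ∀ b₁ b₂ : Fin (n + 1), b₁ ≠ a → b₂ ≠ a → ρ b₁ = ρ b₂ → b₁ = b₂ := by
        intro b₁ b₂ h1 h2 heq
        have h1' : b₁.val ≠ a.val := fun hh => h1 (Fin.ext hh)
        have h2' : b₂.val ≠ a.val := fun hh => h2 (Fin.ext hh)
        rw [hρ] at heq
        simp only at heq
        apply Fin.ext
        split_ifs at heq with hc1 hc2 hc2 <;>
          · have := Fin.val_eq_of_eq heq
            simp at this ⊢
            omega
      set c' : Finset (Fin (n + 1)) → Fin n := fun T => ρ (c (φ T)) with hc'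
      obtain ⟨X, Y, Z, hXu, hYu, hZu, hXY, hXZ, hYZ, hZY, hcY, hcZ⟩ := ih hn1 c'
      refine ⟨φ X, φ Y, φ Z, hφu X hXu, hφu Y hYu, hφu Z hZu, ?_, ?_, ?_, ?_, ?_, ?_⟩
      · exact ⟨(hφsub X Y).2 hXY.1, fun hc => hXY.2 ((hφsub Y X).1 hc)⟩
      · exact ⟨(hφsub X Z).2 hXZ.1, fun hc => hXZ.2 ((hφsub Z X).1 hc)⟩
      · exact fun hc => hYZ ((hφsub Y Z).1 hc)
      · exact fun hc => hZY ((hφsub Z Y).1 hc)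
      · exact hρinj _ _ (hφa Y hYu) (hφa X hXu) hcY
      · exact hρinj _ _ (hφa Z hZu) (hφa X hXu) hcZ

/-- Every `k`-coloring of `B_{k+1} - {[k+1]}` (the subsets of `[k+1]` other than
`[k+1]` itself) contains a monochromatic copy of `V_{1,1}`. -/
theorem Ramsey_B_minus_top (k : ℕ) (hk : 1 ≤ k) (c : Finset (Fin (k + 1)) → Fin k) :
    ∃ X Y Z : Finset (Fin (k + 1)),
      X ≠ Finset.univ ∧ Y ≠ Finset.univ ∧ Z ≠ Finset.univ ∧
      X ⊂ Y ∧ X ⊂ Z ∧ ¬Y ⊆ Z ∧ ¬Z ⊆ Y ∧ c Y = c X ∧ c Z = c X :=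
  ramsey_aux k hk c
end

section
/- For every $k \ge 1$ and every subset $S \subseteq [k+1]$ with $S \ne [k+1]$, there exists a coloring of the family $\mathbf{B}_{k+1} - \{S\}$ (all subsets of $[k+1]$ except $S$) with $k$ colors under which there is no monochromatic copy of $\mathbf{V}_{1,1}$. (Together with the Ramsey property of $\mathbf{B}_{k+1}-\{[k+1]\}$, this shows $\mathbf{B}_{k+1}-\{[k+1]\}$ is the unique minimal $(\mathbf{V}_{1,1};k)$-Ramsey subposet of $\mathbf{B}_{k+1}$.) -/
namespace MinimalV11Aux

/-- Exceptional coloring for the main case `S ≠ ∅`: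
`∅` gets color `k-1`; sets containing `S` get `card - 2`; complements of
singletons `{z}` with `z ∈ S.erase z0` get the rank of `z`; all other sets get
`card - 1`. -/
def exCol (k : ℕ) (S : Finset (Fin (k+1))) (z0 : Fin (k+1)) (A : Finset (Fin (k+1))) : ℕ :=
  if A = (∅ : Finset (Fin (k+1))) then k - 1
  else if S ⊆ A then A.card - 2
  else if Aᶜ.card = 1 ∧ Aᶜ ⊆ S.erase z0 then
    ((S.erase z0).filter (fun w => ∃ u ∈ Aᶜ, w < u)).card
  else A.card - 1

end MinimalV11Aux

open MinimalV11Aux in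
/-- For every subset `S ≠ [k+1]` there is a `k`-coloring of `B_{k+1} - {S}` with no
monochromatic copy of `V_{1,1}`. -/
theorem minimal_V11_Ramsey (k : ℕ) (hk : 1 ≤ k) (S : Finset (Fin (k + 1)))
    (hS : S ≠ Finset.univ) :
    ∃ c : Finset (Fin (k + 1)) → Fin k,
      ¬∃ X Y Z : Finset (Fin (k + 1)),
        X ≠ S ∧ Y ≠ S ∧ Z ≠ S ∧
        X ⊂ Y ∧ X ⊂ Z ∧ ¬Y ⊆ Z ∧ ¬Z ⊆ Y ∧ c Y = c X ∧ c Z = c X := by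
  have hk0 : 0 < k := hk
  by_cases hSe : S = ∅
  · -- case S = ∅ : color by (card - 1), with univ joining class 0
    subst hSe
    refine ⟨fun A => ⟨(if A = Finset.univ then 0 else A.card - 1) % k, Nat.mod_lt _ hk0⟩, ?_⟩
    rintro ⟨X, Y, Z, hXS, hYS, hZS, hXY, hXZ, hYZ, hZY, hcY, hcZ⟩
    by_cases hYu : Y = Finset.univ
    · exact hZY (hYu ▸ Finset.subset_univ Z)
    by_cases hXu : X = Finset.univ
    · exact hXY.not_subset (hXu ▸ Finset.subset_univ Y)
    have h := congrArg Fin.val hcY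
    simp only at h
    rw [if_neg hYu, if_neg hXu] at h
    have hYb : Y.card ≤ k := by
      have h1 : Y.card ≤ k + 1 := by simpa using Finset.card_le_univ Y
      have h2 : Y.card ≠ k + 1 := fun hc => hYu (Finset.eq_univ_of_card _ (by simpa using hc))
      omega
    have hXb : X.card ≤ k := by
      have h1 : X.card ≤ k + 1 := by simpa using Finset.card_le_univ X
      have h2 : X.card ≠ k + 1 := fun hc => hXu (Finset.eq_univ_of_card _ (by simpa using hc))
      omega
    have hXpos : 0 < X.card := Finset.card_pos.mpr (Finset.nonempty_iff_ne_empty.mpr hXS)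
    have hlt := Finset.card_lt_card hXY
    rw [Nat.mod_eq_of_lt (by omega), Nat.mod_eq_of_lt (by omega)] at h
    omega
  · -- main case : S ≠ ∅
    have hSne : S.Nonempty := Finset.nonempty_iff_ne_empty.mpr hSe
    set z0 := S.min' hSne with hz0def
    have hz0 : z0 ∈ S := S.min'_mem hSne
    have hScard_pos : 1 ≤ S.card := Finset.card_pos.mpr hSne
    have hScard_le : S.card ≤ k := by
      have h1 : S.card ≤ k + 1 := by simpa using Finset.card_le_univ S
      have h2 : S.card ≠ k + 1 := fun hc => hS (Finset.eq_univ_of_card _ (by simpa using hc))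
      omega
    have hEcard : (S.erase z0).card = S.card - 1 := Finset.card_erase_of_mem hz0
    have hcol_lt : ∀ A : Finset (Fin (k+1)), exCol k S z0 A < k := by
      intro A
      have hA : A.card ≤ k + 1 := by simpa using Finset.card_le_univ A
      unfold exCol
      split_ifs with h1 h2 h3
      · omega
      · omega
      · have hf := Finset.card_filter_le (S.erase z0) (fun w => ∃ u ∈ Aᶜ, w < u)
        omega
      · have hAu : A ≠ Finset.univ := by
          rintro rfl; exact h2 (Finset.subset_univ S)
        have h4 : A.card ≠ k + 1 := fun hc => hAu (Finset.eq_univ_of_card _ (by simpa using hc))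
        omega
    refine ⟨fun A => ⟨exCol k S z0 A % k, Nat.mod_lt _ hk0⟩, ?_⟩
    rintro ⟨X, Y, Z, hXS, hYS, hZS, hXY, hXZ, hYZ, hZY, hcY, hcZ⟩
    have hYX : exCol k S z0 Y = exCol k S z0 X := by
      have h := congrArg Fin.val hcY
      simp only at h
      rwa [Nat.mod_eq_of_lt (hcol_lt Y), Nat.mod_eq_of_lt (hcol_lt X)] at h
    have hZX : exCol k S z0 Z = exCol k S z0 X := by
      have h := congrArg Fin.val hcZ
      simp only at h
      rwa [Nat.mod_eq_of_lt (hcol_lt Z), Nat.mod_eq_of_lt (hcol_lt X)] at h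
    have hY0 : Y ≠ ∅ := by
      rintro rfl; exact Finset.not_ssubset_empty X hXY
    have hZ0 : Z ≠ ∅ := by
      rintro rfl; exact Finset.not_ssubset_empty X hXZ
    have hYneZ : Y ≠ Z := by
      rintro rfl; exact hYZ (Finset.Subset.refl Y)
    -- branch on the type of X
    by_cases hX0 : X = ∅
    · -- X = ∅ : color is k - 1; then Y, Z ∈ {univ, (univ).erase-complement {z0}}
      have hcolX : exCol k S z0 X = k - 1 := by
        unfold exCol; rw [if_pos hX0]
      have topcl : ∀ W : Finset (Fin (k+1)), W ≠ S → W ≠ ∅ →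
          exCol k S z0 W = k - 1 → W = Finset.univ ∨ Wᶜ = {z0} := by
        intro W hWS hW0 hcolW
        by_cases hW2 : S ⊆ W
        · left
          have hWe : exCol k S z0 W = W.card - 2 := by
            unfold exCol; rw [if_neg hW0, if_pos hW2]
          have hSW : S ⊂ W := hW2.ssubset_of_ne (fun h => hWS h.symm)
          have h1 : S.card < W.card := Finset.card_lt_card hSW
          have h2 : W.card ≤ k + 1 := by simpa using Finset.card_le_univ W
          have h3 : W.card = k + 1 := by omega
          exact Finset.eq_univ_of_card _ (by simpa using h3)
        · by_cases hex : Wᶜ.card = 1 ∧ Wᶜ ⊆ S.erase z0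
          · exfalso
            have hWe : exCol k S z0 W =
                ((S.erase z0).filter (fun w => ∃ u ∈ Wᶜ, w < u)).card := by
              unfold exCol; rw [if_neg hW0, if_neg hW2, if_pos hex]
            obtain ⟨z, hz⟩ := Finset.card_eq_one.mp hex.1
            have hzE : z ∈ S.erase z0 := hex.2 (by rw [hz]; exact Finset.mem_singleton_self z)
            have hfsub : (S.erase z0).filter (fun w => ∃ u ∈ Wᶜ, w < u) ⊆
                (S.erase z0).erase z := by
              intro w hw
              obtain ⟨hwE, u, hu, hwu⟩ := Finset.mem_filter.mp hw
              rw [hz] at hu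
              rw [Finset.mem_singleton] at hu
              subst hu
              exact Finset.mem_erase.mpr ⟨ne_of_lt hwu, hwE⟩
            have hc1 := Finset.card_le_card hfsub
            have hc2 : ((S.erase z0).erase z).card = (S.erase z0).card - 1 :=
              Finset.card_erase_of_mem hzE
            have hc3 : 1 ≤ (S.erase z0).card := Finset.card_pos.mpr ⟨z, hzE⟩
            omega
          · right
            have hWe : exCol k S z0 W = W.card - 1 := by
              unfold exCol; rw [if_neg hW0, if_neg hW2, if_neg hex]
            have hWpos : 0 < W.card := Finset.card_pos.mpr (Finset.nonempty_iff_ne_empty.mpr hW0)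
            have h2 : W.card ≤ k + 1 := by simpa using Finset.card_le_univ W
            have hWcard : W.card = k := by
              have hWu : W ≠ Finset.univ := by
                rintro rfl; exact hW2 (Finset.subset_univ S)
              have h4 : W.card ≠ k + 1 :=
                fun hc => hWu (Finset.eq_univ_of_card _ (by simpa using hc))
              omega
            have hWcc : Wᶜ.card = 1 := by
              rw [Finset.card_compl]
              simp [hWcard]
            obtain ⟨w, hw⟩ := Finset.card_eq_one.mp hWcc
            obtain ⟨zs, hzsS, hzsW⟩ := Finset.not_subset.mp hW2
            have hzsc : zs ∈ Wᶜ := Finset.mem_compl.mpr hzsW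
            rw [hw, Finset.mem_singleton] at hzsc
            have hnsub : ¬ Wᶜ ⊆ S.erase z0 := fun hsub => hex ⟨hWcc, hsub⟩
            have hwE : w ∉ S.erase z0 := by
              intro hmem
              exact hnsub (by rw [hw]; exact Finset.singleton_subset_iff.mpr hmem)
            have hwS : w ∈ S := hzsc ▸ hzsS
            have hwz0 : w = z0 := by
              by_contra hne
              exact hwE (Finset.mem_erase.mpr ⟨hne, hwS⟩)
            rw [hw, hwz0]
      have hYcl := topcl Y hYS hY0 (hYX.trans hcolX)
      have hZcl := topcl Z hZS hZ0 (hZX.trans hcolX)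
      rcases hYcl with hYu | hYc
      · exact hZY (hYu ▸ Finset.subset_univ Z)
      rcases hZcl with hZu | hZc
      · exact hYZ (hZu ▸ Finset.subset_univ Y)
      exact hYneZ (compl_inj_iff.mp (hYc.trans hZc.symm))
    · by_cases hXB2 : S ⊆ X
      · -- S ⊆ X, X ≠ S : Y also contains S, cards force contradiction
        have hcolX : exCol k S z0 X = X.card - 2 := by
          unfold exCol; rw [if_neg hX0, if_pos hXB2]
        have hSY : S ⊆ Y := hXB2.trans hXY.subset
        have hcolY : exCol k S z0 Y = Y.card - 2 := by
          unfold exCol; rw [if_neg hY0, if_pos hSY]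
        have hSX : S ⊂ X := hXB2.ssubset_of_ne (fun h => hXS h.symm)
        have h1 : S.card < X.card := Finset.card_lt_card hSX
        have h2 : X.card < Y.card := Finset.card_lt_card hXY
        rw [hcolY, hcolX] at hYX
        omega
      · by_cases hXex : Xᶜ.card = 1 ∧ Xᶜ ⊆ S.erase z0
        · -- X has complement a singleton; Y must be univ
          have hXcard : X.card = k := by
            have h1 := hXex.1
            rw [Finset.card_compl] at h1
            have h2 : X.card ≤ k + 1 := by simpa using Finset.card_le_univ X
            simp only [Fintype.card_fin] at h1
            omega
          have h2 : Y.card ≤ k + 1 := by simpa using Finset.card_le_univ Y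
          have h3 : X.card < Y.card := Finset.card_lt_card hXY
          have hYu : Y = Finset.univ := Finset.eq_univ_of_card _ (by simp; omega)
          exact hZY (hYu ▸ Finset.subset_univ Z)
        · -- main branch : col X = X.card - 1
          have hcolX : exCol k S z0 X = X.card - 1 := by
            unfold exCol; rw [if_neg hX0, if_neg hXB2, if_neg hXex]
          have hXpos : 0 < X.card := Finset.card_pos.mpr (Finset.nonempty_iff_ne_empty.mpr hX0)
          -- classification of Y and Z
          have classify : ∀ W : Finset (Fin (k+1)), X ⊂ W → W ≠ S →
              exCol k S z0 W = X.card - 1 →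
              (S ⊆ W ∧ W.card = X.card + 1) ∨
              (∃ z, Wᶜ = {z} ∧ z ∈ S.erase z0 ∧
                ((S.erase z0).filter (fun w => w < z)).card = X.card - 1) := by
            intro W hXW hWS hcolW
            have hW0 : W ≠ ∅ := by
              rintro rfl; exact Finset.not_ssubset_empty X hXW
            by_cases hW2 : S ⊆ W
            · left
              refine ⟨hW2, ?_⟩
              have hWe : exCol k S z0 W = W.card - 2 := by
                unfold exCol; rw [if_neg hW0, if_pos hW2]
              have hSW : S ⊂ W := hW2.ssubset_of_ne (fun h => hWS h.symm)
              have h1 : S.card < W.card := Finset.card_lt_card hSW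
              have h2 : X.card < W.card := Finset.card_lt_card hXW
              omega
            · by_cases hex : Wᶜ.card = 1 ∧ Wᶜ ⊆ S.erase z0
              · right
                obtain ⟨z, hz⟩ := Finset.card_eq_one.mp hex.1
                have hzE : z ∈ S.erase z0 := hex.2 (by rw [hz]; exact Finset.mem_singleton_self z)
                refine ⟨z, hz, hzE, ?_⟩
                have hWe : exCol k S z0 W =
                    ((S.erase z0).filter (fun w => ∃ u ∈ Wᶜ, w < u)).card := by
                  unfold exCol; rw [if_neg hW0, if_neg hW2, if_pos hex]
                have hfeq : (S.erase z0).filter (fun w => ∃ u ∈ Wᶜ, w < u) =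
                    (S.erase z0).filter (fun w => w < z) := by
                  apply Finset.ext
                  intro w
                  simp only [Finset.mem_filter, hz, Finset.mem_singleton]
                  constructor
                  · rintro ⟨h1, u, rfl, h3⟩; exact ⟨h1, h3⟩
                  · rintro ⟨h1, h2⟩; exact ⟨h1, z, rfl, h2⟩
                rw [← hfeq, ← hWe, hcolW]
              · exfalso
                have hWe : exCol k S z0 W = W.card - 1 := by
                  unfold exCol; rw [if_neg hW0, if_neg hW2, if_neg hex]
                have hWpos : 0 < W.card :=
                  Finset.card_pos.mpr (Finset.nonempty_iff_ne_empty.mpr hW0)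
                have h2 : X.card < W.card := Finset.card_lt_card hXW
                omega
          have hYcl := classify Y hXY hYS (hYX.trans hcolX)
          have hZcl := classify Z hXZ hZS (hZX.trans hcolX)
          -- auxiliary : the (B2, B3) contradiction
          have b2b3 : ∀ W V : Finset (Fin (k+1)), X ⊂ W → X ⊂ V → W ≠ S →
              (S ⊆ W ∧ W.card = X.card + 1) →
              (∃ z, Vᶜ = {z} ∧ z ∈ S.erase z0 ∧
                ((S.erase z0).filter (fun w => w < z)).card = X.card - 1) → False := by
            intro W V hXW hXV hWS hW hV
            obtain ⟨hSW, hWc⟩ := hW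
            obtain ⟨z, hVc, hzE, hrank⟩ := hV
            have hzS : z ∈ S := (Finset.mem_erase.mp hzE).2
            have hznV : z ∉ V := Finset.mem_compl.mp (by rw [hVc]; exact Finset.mem_singleton_self z)
            have hznX : z ∉ X := fun h => hznV (hXV.subset h)
            -- W \ X = {z}
            have h1 : (W \ X).card = 1 := by
              rw [Finset.card_sdiff_of_subset hXW.subset]; omega
            obtain ⟨a, ha⟩ := Finset.card_eq_one.mp h1
            have hzmem : z ∈ W \ X := Finset.mem_sdiff.mpr ⟨hSW hzS, hznX⟩
            have haz : a = z := by
              rw [ha, Finset.mem_singleton] at hzmem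
              exact hzmem.symm
            rw [haz] at ha
            have hWeq : X ∪ (W \ X) = W := Finset.union_sdiff_of_subset hXW.subset
            rw [ha] at hWeq
            -- S.erase z ⊆ X
            have hSsub : S.erase z ⊆ X := by
              intro w hw
              obtain ⟨hwz, hwS⟩ := Finset.mem_erase.mp hw
              have hwW : w ∈ W := hSW hwS
              rw [← hWeq] at hwW
              rcases Finset.mem_union.mp hwW with h | h
              · exact h
              · exact absurd (Finset.mem_singleton.mp h) hwz
            -- card bound from the rank
            have hfsub : (S.erase z0).filter (fun w => w < z) ⊆ (S.erase z0).erase z := by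
              intro w hw
              obtain ⟨hwE, hwlt⟩ := Finset.mem_filter.mp hw
              exact Finset.mem_erase.mpr ⟨ne_of_lt hwlt, hwE⟩
            have hc1 := Finset.card_le_card hfsub
            have hc2 : ((S.erase z0).erase z).card = (S.erase z0).card - 1 :=
              Finset.card_erase_of_mem hzE
            have hc3 : 1 ≤ (S.erase z0).card := Finset.card_pos.mpr ⟨z, hzE⟩
            have hc4 : (S.erase z).card = S.card - 1 := Finset.card_erase_of_mem hzS
            -- X = S.erase z
            have harith : ∀ fc ec xc sc : ℕ, fc = xc - 1 → fc ≤ ec - 1 → 1 ≤ ec →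
                1 ≤ xc → ec = sc - 1 → xc ≤ sc - 1 := by
              intro fc ec xc sc u1 u2 u3 u4 u5; omega
            have hXle : X.card ≤ (S.erase z).card := by
              rw [hc4]
              exact harith _ _ _ _ hrank (hc1.trans (le_of_eq hc2)) hc3 hXpos hEcard
            have hXeq : S.erase z = X := Finset.eq_of_subset_of_card_le hSsub hXle
            apply hWS
            rw [← hWeq, ← hXeq, Finset.union_comm, ← Finset.insert_eq,
              Finset.insert_erase hzS]
          rcases hYcl with hYb2 | hYb3
          · rcases hZcl with hZb2 | hZb3
            · -- both contain S : X = Y ∩ Z contains S, contradiction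
              obtain ⟨hSY, hYc⟩ := hYb2
              obtain ⟨hSZ, hZc⟩ := hZb2
              have hint : X ⊆ Y ∩ Z := Finset.subset_inter hXY.subset hXZ.subset
              have hne : Y ∩ Z ≠ Y := fun h => hYZ (Finset.inter_eq_left.mp h)
              have hss : Y ∩ Z ⊂ Y := Finset.inter_subset_left.ssubset_of_ne hne
              have hci : (Y ∩ Z).card < Y.card := Finset.card_lt_card hss
              have hXeq : X = Y ∩ Z := Finset.eq_of_subset_of_card_le hint (by omega)
              exact hXB2 (hXeq ▸ Finset.subset_inter hSY hSZ)
            · exact b2b3 Y Z hXY hXZ hYS hYb2 hZb3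
          · rcases hZcl with hZb2 | hZb3
            · exact b2b3 Z Y hXZ hXY hZS hZb2 hYb3
            · -- both exiles : rank is injective
              obtain ⟨zy, hYc, hzyE, hrky⟩ := hYb3
              obtain ⟨zz, hZc, hzzE, hrkz⟩ := hZb3
              have hzyz : zy ≠ zz := by
                rintro rfl
                exact hYneZ (compl_inj_iff.mp (hYc.trans hZc.symm))
              have key : ∀ a b : Fin (k+1), a ∈ S.erase z0 → a < b →
                  ((S.erase z0).filter (fun w => w < a)).card <
                  ((S.erase z0).filter (fun w => w < b)).card := by
                intro a b haE hab
                apply Finset.card_lt_card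
                refine (Finset.ssubset_iff_of_subset ?_).mpr ?_
                · intro w hw
                  obtain ⟨hwE, hwlt⟩ := Finset.mem_filter.mp hw
                  exact Finset.mem_filter.mpr ⟨hwE, lt_trans hwlt hab⟩
                · refine ⟨a, Finset.mem_filter.mpr ⟨haE, hab⟩, ?_⟩
                  intro hmem
                  exact absurd (Finset.mem_filter.mp hmem).2 (lt_irrefl a)
              rcases lt_trichotomy zy zz with h | h | h
              · have := key zy zz hzyE h
                omega
              · exact hzyz h
              · have := key zz zy hzzE h
                omega
end

section
/- Let $S_1$ and $S_2$ be two distinct nonempty proper subsets of $[4]$ such that $S_2 \ne [4] - S_1$ and it is not the case that $|S_1| = |S_2| = 2$. Then there exists a coloring of the family $\mathbf{B}_4 - \{S_1, S_2, [4]\}$ with two colors $1$ and $2$ under which there is no copy of $\mathbf{V}_{1,1}$ all of whose sets have color $1$ and no copy of $\mathbf{V}_{2,2}$ all of whose sets have color $2$. -/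
/-- A copy of `V_{m,n}` inside the family `F` of subsets of `Fin N`, all of whose
sets receive the color `col` under the coloring `c`. -/
def VCopyColoredIn {N : ℕ} {α : Type*} (m n : ℕ) (F : Set (Finset (Fin N)))
    (c : Finset (Fin N) → α) (col : α) : Prop :=
  ∃ (X : Finset (Fin N)) (Y : Fin m → Finset (Fin N)) (Z : Fin n → Finset (Fin N)),
    X ∈ F ∧ (∀ i, Y i ∈ F) ∧ (∀ j, Z j ∈ F) ∧
    StrictMono Y ∧ StrictMono Z ∧ (∀ i, X ⊂ Y i) ∧ (∀ j, X ⊂ Z j) ∧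
    (∀ i j, ¬Y i ⊆ Z j ∧ ¬Z j ⊆ Y i) ∧
    c X = col ∧ (∀ i, c (Y i) = col) ∧ (∀ j, c (Z j) = col)

set_option synthInstance.maxSize 5000
set_option synthInstance.maxHeartbeats 2000000
set_option maxHeartbeats 4000000

def Good (S₁ S₂ : Finset (Fin 4)) : Prop :=
  ∃ c : Finset (Fin 4) → Fin 2,
    ¬VCopyColoredIn 1 1 {X | X ≠ S₁ ∧ X ≠ S₂ ∧ X ≠ Finset.univ} c 0 ∧
    ¬VCopyColoredIn 2 2 {X | X ≠ S₁ ∧ X ≠ S₂ ∧ X ≠ Finset.univ} c 1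

lemma elim11 (P : Finset (Fin 4) → Prop) (c : Finset (Fin 4) → Fin 2) (col : Fin 2)
    (h : VCopyColoredIn 1 1 {X | P X} c col) :
    ∃ X, (c X = col ∧ P X) ∧ ∃ Y, (c Y = col ∧ P Y ∧ X ⊂ Y) ∧
      ∃ Z, c Z = col ∧ P Z ∧ X ⊂ Z ∧ ¬Y ⊆ Z ∧ ¬Z ⊆ Y := by
  obtain ⟨X, Y, Z, hX, hY, hZ, _, _, hXY, hXZ, hinc, cX, cY, cZ⟩ := h
  exact ⟨X, ⟨cX, hX⟩, Y 0, ⟨cY 0, hY 0, hXY 0⟩,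
    Z 0, cZ 0, hZ 0, hXZ 0, (hinc 0 0).1, (hinc 0 0).2⟩

lemma elim22 (P : Finset (Fin 4) → Prop) (c : Finset (Fin 4) → Fin 2) (col : Fin 2)
    (h : VCopyColoredIn 2 2 {X | P X} c col) :
    ∃ X, (c X = col ∧ P X) ∧ ∃ Y1, (c Y1 = col ∧ P Y1 ∧ X ⊂ Y1) ∧
      ∃ Z1, (c Z1 = col ∧ P Z1 ∧ X ⊂ Z1 ∧ ¬Y1 ⊆ Z1 ∧ ¬Z1 ⊆ Y1) ∧
      ∃ Y2, (c Y2 = col ∧ P Y2 ∧ Y1 ⊂ Y2 ∧ ¬Y2 ⊆ Z1 ∧ ¬Z1 ⊆ Y2) ∧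
      ∃ Z2, c Z2 = col ∧ P Z2 ∧ Z1 ⊂ Z2 ∧ ¬Y1 ⊆ Z2 ∧ ¬Z2 ⊆ Y1 ∧ ¬Y2 ⊆ Z2 ∧ ¬Z2 ⊆ Y2 := by
  obtain ⟨X, Y, Z, hX, hY, hZ, hmY, hmZ, hXY, hXZ, hinc, cX, cY, cZ⟩ := h
  exact ⟨X, ⟨cX, hX⟩, Y 0, ⟨cY 0, hY 0, hXY 0⟩,
    Z 0, ⟨cZ 0, hZ 0, hXZ 0, (hinc 0 0).1, (hinc 0 0).2⟩,
    Y 1, ⟨cY 1, hY 1, hmY (by decide), (hinc 1 0).1, (hinc 1 0).2⟩,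
    Z 1, cZ 1, hZ 1, hmZ (by decide), (hinc 0 1).1, (hinc 0 1).2, (hinc 1 1).1, (hinc 1 1).2⟩

lemma vcopy_map {m n : ℕ} (σ : Equiv.Perm (Fin 4)) (S₁ S₂ : Finset (Fin 4))
    (c : Finset (Fin 4) → Fin 2) (col : Fin 2)
    (h : VCopyColoredIn m n {X | X ≠ S₁ ∧ X ≠ S₂ ∧ X ≠ Finset.univ}
      (fun X => c (X.map σ.toEmbedding)) col) :
    VCopyColoredIn m n
      {X | X ≠ S₁.map σ.toEmbedding ∧ X ≠ S₂.map σ.toEmbedding ∧ X ≠ Finset.univ} c col := by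
  obtain ⟨X, Y, Z, hX, hY, hZ, hmY, hmZ, hXY, hXZ, hinc, cX, cY, cZ⟩ := h
  have inj := Finset.map_injective σ.toEmbedding
  have huniv : ∀ A : Finset (Fin 4), A ≠ Finset.univ → A.map σ.toEmbedding ≠ Finset.univ := by
    intro A hA hcon
    exact hA (inj (by rw [hcon, Finset.map_univ_equiv]))
  have mem : ∀ A : Finset (Fin 4), (A ≠ S₁ ∧ A ≠ S₂ ∧ A ≠ Finset.univ) →
      (A.map σ.toEmbedding ≠ S₁.map σ.toEmbedding ∧
       A.map σ.toEmbedding ≠ S₂.map σ.toEmbedding ∧ A.map σ.toEmbedding ≠ Finset.univ) :=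
    fun A hA => ⟨inj.ne hA.1, inj.ne hA.2.1, huniv A hA.2.2⟩
  refine ⟨X.map σ.toEmbedding, fun i => (Y i).map σ.toEmbedding, fun j => (Z j).map σ.toEmbedding,
    mem X hX, fun i => mem _ (hY i), fun j => mem _ (hZ j),
    fun a b hab => Finset.map_ssubset_map.2 (hmY hab),
    fun a b hab => Finset.map_ssubset_map.2 (hmZ hab),
    fun i => Finset.map_ssubset_map.2 (hXY i),
    fun j => Finset.map_ssubset_map.2 (hXZ j),
    fun i j => ⟨fun hs => (hinc i j).1 (Finset.map_subset_map.1 hs),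
      fun hs => (hinc i j).2 (Finset.map_subset_map.1 hs)⟩,
    cX, cY, cZ⟩

lemma transport (σ : Equiv.Perm (Fin 4)) (S₁ S₂ : Finset (Fin 4))
    (h : Good (S₁.map σ.toEmbedding) (S₂.map σ.toEmbedding)) : Good S₁ S₂ := by
  obtain ⟨c, h1, h2⟩ := h
  exact ⟨fun X => c (X.map σ.toEmbedding),
    fun hv => h1 (vcopy_map σ S₁ S₂ c 0 hv),
    fun hv => h2 (vcopy_map σ S₁ S₂ c 1 hv)⟩

lemma case0 : Good ({0} : Finset (Fin 4)) ({1} : Finset (Fin 4)) :=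
  ⟨fun X => if X ∈ ({({2} : Finset (Fin 4)), ({0,1} : Finset (Fin 4)), ({0,2} : Finset (Fin 4)), ({0,3} : Finset (Fin 4)), ({1,2} : Finset (Fin 4)), ({1,3} : Finset (Fin 4)), ({0,1,2} : Finset (Fin 4)), ({0,1,3} : Finset (Fin 4)), ({0,2,3} : Finset (Fin 4))} : Finset (Finset (Fin 4))) then 1 else 0,
   fun h => absurd (elim11 _ _ _ h) (by decide),
   fun h => absurd (elim22 _ _ _ h) (by decide)⟩

lemma case1 : Good ({0} : Finset (Fin 4)) ({1,2} : Finset (Fin 4)) :=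
  ⟨fun X => if X ∈ ({({1} : Finset (Fin 4)), ({2} : Finset (Fin 4)), ({0,1} : Finset (Fin 4)), ({0,2} : Finset (Fin 4)), ({0,3} : Finset (Fin 4)), ({1,3} : Finset (Fin 4)), ({0,1,2} : Finset (Fin 4)), ({0,1,3} : Finset (Fin 4)), ({0,2,3} : Finset (Fin 4))} : Finset (Finset (Fin 4))) then 1 else 0,
   fun h => absurd (elim11 _ _ _ h) (by decide),
   fun h => absurd (elim22 _ _ _ h) (by decide)⟩

lemma case2 : Good ({0} : Finset (Fin 4)) ({0,1} : Finset (Fin 4)) :=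
  ⟨fun X => if X ∈ ({(∅ : Finset (Fin 4)), ({1} : Finset (Fin 4)), ({2} : Finset (Fin 4)), ({3} : Finset (Fin 4)), ({0,2,3} : Finset (Fin 4)), ({1,2,3} : Finset (Fin 4))} : Finset (Finset (Fin 4))) then 1 else 0,
   fun h => absurd (elim11 _ _ _ h) (by decide),
   fun h => absurd (elim22 _ _ _ h) (by decide)⟩

lemma case3 : Good ({0} : Finset (Fin 4)) ({0,1,2} : Finset (Fin 4)) :=
  ⟨fun X => if X ∈ ({({1} : Finset (Fin 4)), ({2} : Finset (Fin 4)), ({0,1} : Finset (Fin 4)), ({0,2} : Finset (Fin 4)), ({0,3} : Finset (Fin 4)), ({1,2} : Finset (Fin 4)), ({1,3} : Finset (Fin 4)), ({0,1,3} : Finset (Fin 4)), ({0,2,3} : Finset (Fin 4))} : Finset (Finset (Fin 4))) then 1 else 0,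
   fun h => absurd (elim11 _ _ _ h) (by decide),
   fun h => absurd (elim22 _ _ _ h) (by decide)⟩

lemma case4 : Good ({0,1} : Finset (Fin 4)) ({2} : Finset (Fin 4)) :=
  ⟨fun X => if X ∈ ({(∅ : Finset (Fin 4)), ({3} : Finset (Fin 4)), ({0,3} : Finset (Fin 4)), ({1,3} : Finset (Fin 4)), ({2,3} : Finset (Fin 4)), ({0,1,2} : Finset (Fin 4)), ({0,1,3} : Finset (Fin 4))} : Finset (Finset (Fin 4))) then 1 else 0,
   fun h => absurd (elim11 _ _ _ h) (by decide),
   fun h => absurd (elim22 _ _ _ h) (by decide)⟩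

lemma case5 : Good ({0,1} : Finset (Fin 4)) ({0} : Finset (Fin 4)) :=
  ⟨fun X => if X ∈ ({(∅ : Finset (Fin 4)), ({1} : Finset (Fin 4)), ({2} : Finset (Fin 4)), ({3} : Finset (Fin 4)), ({0,2,3} : Finset (Fin 4)), ({1,2,3} : Finset (Fin 4))} : Finset (Finset (Fin 4))) then 1 else 0,
   fun h => absurd (elim11 _ _ _ h) (by decide),
   fun h => absurd (elim22 _ _ _ h) (by decide)⟩

lemma case6 : Good ({0,1} : Finset (Fin 4)) ({0,2,3} : Finset (Fin 4)) :=
  ⟨fun X => if X ∈ ({(∅ : Finset (Fin 4)), ({0} : Finset (Fin 4)), ({1} : Finset (Fin 4)), ({2} : Finset (Fin 4)), ({3} : Finset (Fin 4)), ({1,2,3} : Finset (Fin 4))} : Finset (Finset (Fin 4))) then 1 else 0,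
   fun h => absurd (elim11 _ _ _ h) (by decide),
   fun h => absurd (elim22 _ _ _ h) (by decide)⟩

lemma case7 : Good ({0,1} : Finset (Fin 4)) ({0,1,2} : Finset (Fin 4)) :=
  ⟨fun X => if X ∈ ({(∅ : Finset (Fin 4)), ({3} : Finset (Fin 4)), ({0,2} : Finset (Fin 4)), ({1,2} : Finset (Fin 4)), ({0,1,3} : Finset (Fin 4)), ({0,2,3} : Finset (Fin 4))} : Finset (Finset (Fin 4))) then 1 else 0,
   fun h => absurd (elim11 _ _ _ h) (by decide),
   fun h => absurd (elim22 _ _ _ h) (by decide)⟩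

lemma case8 : Good ({0,1,2} : Finset (Fin 4)) ({0} : Finset (Fin 4)) :=
  ⟨fun X => if X ∈ ({({1} : Finset (Fin 4)), ({2} : Finset (Fin 4)), ({0,1} : Finset (Fin 4)), ({0,2} : Finset (Fin 4)), ({0,3} : Finset (Fin 4)), ({1,2} : Finset (Fin 4)), ({1,3} : Finset (Fin 4)), ({0,1,3} : Finset (Fin 4)), ({0,2,3} : Finset (Fin 4))} : Finset (Finset (Fin 4))) then 1 else 0,
   fun h => absurd (elim11 _ _ _ h) (by decide),
   fun h => absurd (elim22 _ _ _ h) (by decide)⟩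

lemma case9 : Good ({0,1,2} : Finset (Fin 4)) ({0,3} : Finset (Fin 4)) :=
  ⟨fun X => if X ∈ ({(∅ : Finset (Fin 4)), ({0} : Finset (Fin 4)), ({1} : Finset (Fin 4)), ({2} : Finset (Fin 4)), ({3} : Finset (Fin 4)), ({1,2,3} : Finset (Fin 4))} : Finset (Finset (Fin 4))) then 1 else 0,
   fun h => absurd (elim11 _ _ _ h) (by decide),
   fun h => absurd (elim22 _ _ _ h) (by decide)⟩

lemma case10 : Good ({0,1,2} : Finset (Fin 4)) ({0,1} : Finset (Fin 4)) :=
  ⟨fun X => if X ∈ ({(∅ : Finset (Fin 4)), ({3} : Finset (Fin 4)), ({0,2} : Finset (Fin 4)), ({1,2} : Finset (Fin 4)), ({0,1,3} : Finset (Fin 4)), ({0,2,3} : Finset (Fin 4))} : Finset (Finset (Fin 4))) then 1 else 0,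
   fun h => absurd (elim11 _ _ _ h) (by decide),
   fun h => absurd (elim22 _ _ _ h) (by decide)⟩

lemma case11 : Good ({0,1,2} : Finset (Fin 4)) ({0,1,3} : Finset (Fin 4)) :=
  ⟨fun X => if X ∈ ({(∅ : Finset (Fin 4)), ({0} : Finset (Fin 4)), ({1} : Finset (Fin 4)), ({2} : Finset (Fin 4)), ({3} : Finset (Fin 4)), ({2,3} : Finset (Fin 4))} : Finset (Finset (Fin 4))) then 1 else 0,
   fun h => absurd (elim11 _ _ _ h) (by decide),
   fun h => absurd (elim22 _ _ _ h) (by decide)⟩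

lemma reduce (S₁ S₂ : Finset (Fin 4)) (h12 : S₁ ≠ S₂)
    (h1 : S₁.Nonempty) (h2 : S₂.Nonempty)
    (h1' : S₁ ≠ Finset.univ) (h2' : S₂ ≠ Finset.univ)
    (hcompl : S₂ ≠ S₁ᶜ) (hcard : ¬(S₁.card = 2 ∧ S₂.card = 2)) :
    ∃ σ : Equiv.Perm (Fin 4),
      (S₁.map σ.toEmbedding = ({0} : Finset (Fin 4)) ∧ S₂.map σ.toEmbedding = ({1} : Finset (Fin 4))) ∨
      (S₁.map σ.toEmbedding = ({0} : Finset (Fin 4)) ∧ S₂.map σ.toEmbedding = ({1,2} : Finset (Fin 4))) ∨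
      (S₁.map σ.toEmbedding = ({0} : Finset (Fin 4)) ∧ S₂.map σ.toEmbedding = ({0,1} : Finset (Fin 4))) ∨
      (S₁.map σ.toEmbedding = ({0} : Finset (Fin 4)) ∧ S₂.map σ.toEmbedding = ({0,1,2} : Finset (Fin 4))) ∨
      (S₁.map σ.toEmbedding = ({0,1} : Finset (Fin 4)) ∧ S₂.map σ.toEmbedding = ({2} : Finset (Fin 4))) ∨
      (S₁.map σ.toEmbedding = ({0,1} : Finset (Fin 4)) ∧ S₂.map σ.toEmbedding = ({0} : Finset (Fin 4))) ∨
      (S₁.map σ.toEmbedding = ({0,1} : Finset (Fin 4)) ∧ S₂.map σ.toEmbedding = ({0,2,3} : Finset (Fin 4))) ∨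
      (S₁.map σ.toEmbedding = ({0,1} : Finset (Fin 4)) ∧ S₂.map σ.toEmbedding = ({0,1,2} : Finset (Fin 4))) ∨
      (S₁.map σ.toEmbedding = ({0,1,2} : Finset (Fin 4)) ∧ S₂.map σ.toEmbedding = ({0} : Finset (Fin 4))) ∨
      (S₁.map σ.toEmbedding = ({0,1,2} : Finset (Fin 4)) ∧ S₂.map σ.toEmbedding = ({0,3} : Finset (Fin 4))) ∨
      (S₁.map σ.toEmbedding = ({0,1,2} : Finset (Fin 4)) ∧ S₂.map σ.toEmbedding = ({0,1} : Finset (Fin 4))) ∨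
      (S₁.map σ.toEmbedding = ({0,1,2} : Finset (Fin 4)) ∧ S₂.map σ.toEmbedding = ({0,1,3} : Finset (Fin 4))) := by
  revert h12 h1 h2 h1' h2' hcompl hcard
  revert S₁ S₂
  decide

/-- For distinct nonempty proper `S₁, S₂ ⊆ [4]` with `S₂ ≠ S₁ᶜ` and not both of
`2` elements, there is a `2`-coloring of `B₄ - {S₁, S₂, [4]}` with no copy of
`V_{1,1}` in color `0` and no copy of `V_{2,2}` in color `1`. -/
theorem nonRamsey_B4 (S₁ S₂ : Finset (Fin 4)) (h12 : S₁ ≠ S₂)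
    (h1 : S₁.Nonempty) (h2 : S₂.Nonempty)
    (h1' : S₁ ≠ Finset.univ) (h2' : S₂ ≠ Finset.univ)
    (hcompl : S₂ ≠ S₁ᶜ) (hcard : ¬(S₁.card = 2 ∧ S₂.card = 2)) :
    ∃ c : Finset (Fin 4) → Fin 2,
      ¬VCopyColoredIn 1 1 {X | X ≠ S₁ ∧ X ≠ S₂ ∧ X ≠ Finset.univ} c 0 ∧
      ¬VCopyColoredIn 2 2 {X | X ≠ S₁ ∧ X ≠ S₂ ∧ X ≠ Finset.univ} c 1 := by
  obtain ⟨σ, h⟩ := reduce S₁ S₂ h12 h1 h2 h1' h2' hcompl hcard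
  have hg : Good S₁ S₂ := by
    apply transport σ
    rcases h with h|h|h|h|h|h|h|h|h|h|h|h <;> rw [h.1, h.2]
    exacts [case0, case1, case2, case3, case4, case5, case6, case7, case8, case9, case10, case11]
  exact hg
end

section
/- Let $S_1$, $S_2$, $S_3$ be three pairwise distinct $2$-element subsets of $[4]$. Then there exists a coloring of the family $\mathbf{B}_4 - \{S_1, S_2, S_3, [4]\}$ with two colors $1$ and $2$ under which there is no copy of $\mathbf{V}_{1,1}$ all of whose sets have color $1$ and no copy of $\mathbf{V}_{2,2}$ all of whose sets have color $2$. (This establishes the minimality of the posets $\mathbf{B}_4 - \{S_1,S_2,[4]\}$ with $|S_1|=|S_2|=2$ as $(\mathbf{V}_{1,1},\mathbf{V}_{2,2})$-Ramsey posets.) -/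

abbrev InFam (S₁ S₂ S₃ X : Finset (Fin 4)) : Prop :=
  X ≠ S₁ ∧ X ≠ S₂ ∧ X ≠ S₃ ∧ X ≠ Finset.univ

abbrev OkB (S₁ S₂ S₃ : Finset (Fin 4)) (B : Finset (Finset (Fin 4))) : Prop :=
  (∀ X : Finset (Fin 4), X ∉ B → InFam S₁ S₂ S₃ X →
    ∀ Y : Finset (Fin 4), Y ∉ B → X ⊂ Y → InFam S₁ S₂ S₃ Y →
    ∀ Z : Finset (Fin 4), Z ∉ B → X ⊂ Z → InFam S₁ S₂ S₃ Z →
      (Y ⊆ Z ∨ Z ⊆ Y)) ∧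
  (∀ X : Finset (Fin 4), X ∈ B → InFam S₁ S₂ S₃ X →
    ∀ Y1 : Finset (Fin 4), Y1 ∈ B → X ⊂ Y1 → InFam S₁ S₂ S₃ Y1 →
    ∀ Y2 : Finset (Fin 4), Y2 ∈ B → Y1 ⊂ Y2 → InFam S₁ S₂ S₃ Y2 →
    ∀ Z1 : Finset (Fin 4), Z1 ∈ B → X ⊂ Z1 → ¬Y1 ⊆ Z1 → ¬Z1 ⊆ Y1 → ¬Y2 ⊆ Z1 →
      ¬Z1 ⊆ Y2 → InFam S₁ S₂ S₃ Z1 →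
    ∀ Z2 : Finset (Fin 4), Z2 ∈ B → Z1 ⊂ Z2 → InFam S₁ S₂ S₃ Z2 →
      (Y1 ⊆ Z2 ∨ Z2 ⊆ Y1 ∨ Y2 ⊆ Z2 ∨ Z2 ⊆ Y2))

def BP (P : Finset (Fin 4)) : Finset (Finset (Fin 4)) := {∅, {0}, {1}, {2}, {3}, P}
def BT (s : Fin 4) (T : Finset (Fin 4)) : Finset (Finset (Fin 4)) :=
  {∅, {s}, T, {0,1,2}, {0,1,3}, {0,2,3}, {1,2,3}}

abbrev GoodB (S₁ S₂ S₃ : Finset (Fin 4)) : Prop :=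
  OkB S₁ S₂ S₃ (BP {0,1,2}) ∨ OkB S₁ S₂ S₃ (BP {0,1,3}) ∨
  OkB S₁ S₂ S₃ (BP {0,2,3}) ∨ OkB S₁ S₂ S₃ (BP {1,2,3}) ∨
  OkB S₁ S₂ S₃ (BT 0 {0,1}) ∨ OkB S₁ S₂ S₃ (BT 1 {0,1}) ∨
  OkB S₁ S₂ S₃ (BT 0 {0,2}) ∨ OkB S₁ S₂ S₃ (BT 2 {0,2}) ∨
  OkB S₁ S₂ S₃ (BT 0 {0,3}) ∨ OkB S₁ S₂ S₃ (BT 3 {0,3}) ∨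
  OkB S₁ S₂ S₃ (BT 1 {1,2}) ∨ OkB S₁ S₂ S₃ (BT 2 {1,2}) ∨
  OkB S₁ S₂ S₃ (BT 1 {1,3}) ∨ OkB S₁ S₂ S₃ (BT 3 {1,3}) ∨
  OkB S₁ S₂ S₃ (BT 2 {2,3}) ∨ OkB S₁ S₂ S₃ (BT 3 {2,3})

set_option synthInstance.maxSize 400000 in
set_option synthInstance.maxHeartbeats 10000000 in
instance okBdec (S₁ S₂ S₃ : Finset (Fin 4)) (B : Finset (Finset (Fin 4))) :
    Decidable (OkB S₁ S₂ S₃ B) := inferInstance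

set_option maxRecDepth 100000 in
set_option maxHeartbeats 4000000 in
lemma key : ∀ S₁ S₂ S₃ : Finset (Fin 4), S₁.card = 2 → S₂.card = 2 → S₃.card = 2 →
    S₁ ≠ S₂ → S₁ ≠ S₃ → S₂ ≠ S₃ → GoodB S₁ S₂ S₃ := by decide

lemma good_exists {S₁ S₂ S₃ : Finset (Fin 4)} (h : GoodB S₁ S₂ S₃) :
    ∃ B : Finset (Finset (Fin 4)), OkB S₁ S₂ S₃ B := by
  rcases h with h|h|h|h|h|h|h|h|h|h|h|h|h|h|h|h <;> exact ⟨_, h⟩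

/-- For pairwise distinct `2`-element subsets `S₁, S₂, S₃` of `[4]`, there is a
`2`-coloring of `B₄ - {S₁, S₂, S₃, [4]}` with no copy of `V_{1,1}` in color `0`
and no copy of `V_{2,2}` in color `1`. -/
theorem nonRamsey_B4_three_middle (S₁ S₂ S₃ : Finset (Fin 4))
    (h12 : S₁ ≠ S₂) (h13 : S₁ ≠ S₃) (h23 : S₂ ≠ S₃)
    (h1 : S₁.card = 2) (h2 : S₂.card = 2) (h3 : S₃.card = 2) :
    ∃ c : Finset (Fin 4) → Fin 2,
      ¬VCopyColoredIn 1 1 {X | X ≠ S₁ ∧ X ≠ S₂ ∧ X ≠ S₃ ∧ X ≠ Finset.univ} c 0 ∧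
      ¬VCopyColoredIn 2 2 {X | X ≠ S₁ ∧ X ≠ S₂ ∧ X ≠ S₃ ∧ X ≠ Finset.univ} c 1 := by
  obtain ⟨B, hA, hB⟩ := good_exists (key S₁ S₂ S₃ h1 h2 h3 h12 h13 h23)
  refine ⟨fun X => if X ∈ B then 1 else 0, ?_, ?_⟩
  · rintro ⟨X, Y, Z, hXF, hYF, hZF, -, -, hXY, hXZ, hinc, hcX, hcY, hcZ⟩
    have hXB : X ∉ B := fun h => by simp [h] at hcX
    have hYB : Y 0 ∉ B := fun h => by have := hcY 0; simp [h] at this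
    have hZB : Z 0 ∉ B := fun h => by have := hcZ 0; simp [h] at this
    rcases hA X hXB hXF (Y 0) hYB (hXY 0) (hYF 0) (Z 0) hZB (hXZ 0) (hZF 0) with h | h
    · exact (hinc 0 0).1 h
    · exact (hinc 0 0).2 h
  · rintro ⟨X, Y, Z, hXF, hYF, hZF, hmY, hmZ, hXY, hXZ, hinc, hcX, hcY, hcZ⟩
    have mem : ∀ W : Finset (Fin 4), (if W ∈ B then (1 : Fin 2) else 0) = 1 → W ∈ B := by
      intro W h
      by_contra hW
      rw [if_neg hW] at h
      exact absurd h (by decide)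
    have hXB : X ∈ B := mem _ hcX
    have hY0 : Y 0 ∈ B := mem _ (hcY 0)
    have hY1 : Y 1 ∈ B := mem _ (hcY 1)
    have hZ0 : Z 0 ∈ B := mem _ (hcZ 0)
    have hZ1 : Z 1 ∈ B := mem _ (hcZ 1)
    have hYY : Y 0 ⊂ Y 1 := hmY (by decide : (0 : Fin 2) < 1)
    have hZZ : Z 0 ⊂ Z 1 := hmZ (by decide : (0 : Fin 2) < 1)
    rcases hB X hXB hXF (Y 0) hY0 (hXY 0) (hYF 0) (Y 1) hY1 hYY (hYF 1)
        (Z 0) hZ0 (hXZ 0) (hinc 0 0).1 (hinc 0 0).2 (hinc 1 0).1 (hinc 1 0).2 (hZF 0)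
        (Z 1) hZ1 hZZ (hZF 1) with h | h | h | h
    · exact (hinc 0 1).1 h
    · exact (hinc 0 1).2 h
    · exact (hinc 1 1).1 h
    · exact (hinc 1 1).2 h
end

section
/- Let $\mathbf{P}$ be a finite poset with at least $2$ elements, let $d = \dim_2(\mathbf{P})$ be the least integer $N$ such that there is an embedding of $\mathbf{P}$ into the subsets of $[N]$ (an injection $\phi$ with $x \le y$ in $\mathbf{P}$ if and only if $\phi(x) \subseteq \phi(y)$), and let $m(\mathbf{P}) \in \{0,1,2\}$ be the number of extremal elements of $\mathbf{P}$ (an element $x$ with $x \le z$ for all $z \in \mathbf{P}$ counts once, and an element $y$ with $z \le y$ for all $z \in \mathbf{P}$ counts once). Then for $n = d + m(\mathbf{P})$, every coloring of the subsets of $[n]$ (with an arbitrary set of colors) contains either a monochromatic copy of $\mathbf{P}$ or a rainbow copy of $\mathbf{A}_2$, i.e. two subsets $X, Y$ with $X \not\subseteq Y$, $Y \not\subseteq X$, and different colors. (Hence $RR(\mathbf{P},\mathbf{A}_2) \le \dim_2(\mathbf{P}) + m(\mathbf{P})$.) -/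
open Classical in
/-- For a finite poset `P` with at least two elements, with `d = dim₂(P)` and `mP`
its number of extremal elements, every coloring of the subsets of `[d + mP]`
contains a monochromatic copy of `P` or a rainbow copy of `A₂` (two incomparable
subsets of different colors).  Hence `RR(P, A₂) ≤ dim₂(P) + m(P)`. -/
theorem RR_P_A2_upper (P : Type*) [PartialOrder P] [Fintype P]
    (hcard : 2 ≤ Fintype.card P) (d mP : ℕ)
    (hd : IsLeast {N | ∃ φ : P → Finset (Fin N),
      Function.Injective φ ∧ ∀ x y : P, x ≤ y ↔ φ x ⊆ φ y} d)
    (hm : mP = (if ∃ x : P, ∀ z : P, x ≤ z then 1 else 0) +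
               (if ∃ y : P, ∀ z : P, z ≤ y then 1 else 0))
    {α : Type*} (c : Finset (Fin (d + mP)) → α) :
    (∃ φ : P → Finset (Fin (d + mP)), Function.Injective φ ∧
        (∀ x y : P, x ≤ y ↔ φ x ⊆ φ y) ∧ ∃ col, ∀ x : P, c (φ x) = col) ∨
    (∃ X Y : Finset (Fin (d + mP)), ¬X ⊆ Y ∧ ¬Y ⊆ X ∧ c X ≠ c Y) := by
  classical
  by_cases hrb : ∃ X Y : Finset (Fin (d + mP)), ¬X ⊆ Y ∧ ¬Y ⊆ X ∧ c X ≠ c Y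
  · exact Or.inr hrb
  push_neg at hrb
  left
  -- all sets strictly between ∅ and univ get the same color
  have hsame : ∀ X Y : Finset (Fin (d + mP)), X.Nonempty → X ≠ Finset.univ →
      Y.Nonempty → Y ≠ Finset.univ → c X = c Y := by
    intro X Y hXne hXu hYne hYu
    by_cases hcomp : X ⊆ Y ∨ Y ⊆ X
    · obtain ⟨a, haX, haY⟩ : ∃ a, a ∈ X ∧ a ∈ Y := by
        rcases hcomp with h | h
        · obtain ⟨a, ha⟩ := hXne; exact ⟨a, ha, h ha⟩
        · obtain ⟨a, ha⟩ := hYne; exact ⟨a, h ha, ha⟩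
      set Z : Finset (Fin (d + mP)) := {a}ᶜ with hZdef
      have hZ : ∀ W : Finset (Fin (d + mP)), a ∈ W → W ≠ Finset.univ →
          ¬W ⊆ Z ∧ ¬Z ⊆ W := by
        intro W haW hWu
        constructor
        · intro h
          have := h haW
          simp [hZdef] at this
        · intro h
          obtain ⟨b, hb⟩ : ∃ b, b ∉ W := by
            by_contra hb; push_neg at hb
            exact hWu (Finset.eq_univ_iff_forall.mpr hb)
          have hba : b ≠ a := fun e => hb (e ▸ haW)
          have hbZ : b ∈ Z := by simp [hZdef, hba]
          exact hb (h hbZ)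
      obtain ⟨h1, h2⟩ := hZ X haX hXu
      obtain ⟨h3, h4⟩ := hZ Y haY hYu
      calc c X = c Z := hrb X Z h1 h2
        _ = c Y := (hrb Y Z h3 h4).symm
    · push_neg at hcomp
      exact hrb X Y hcomp.1 hcomp.2
  obtain ⟨φ, hinj, hord⟩ := hd.1
  have hle : d ≤ d + mP := Nat.le_add_right d mP
  set E : Finset (Fin (d + mP)) :=
    Finset.univ.filter (fun i => (i : ℕ) = d ∧ ∃ x : P, ∀ z : P, x ≤ z) with hE
  set ψ : P → Finset (Fin (d + mP)) := fun x => (φ x).map (Fin.castLEEmb hle) ∪ E with hψ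
  have key : ∀ x y : P, ψ x ⊆ ψ y ↔ φ x ⊆ φ y := by
    intro x y
    constructor
    · intro h a ha
      have h1 : Fin.castLE hle a ∈ ψ y := h (by
        simp only [hψ, Finset.mem_union, Finset.mem_map, Fin.castLEEmb_apply]
        exact Or.inl ⟨a, ha, rfl⟩)
      simp only [hψ, Finset.mem_union, Finset.mem_map, Fin.castLEEmb_apply,
        hE, Finset.mem_filter] at h1
      rcases h1 with ⟨b, hb, hba⟩ | ⟨_, hd', _⟩
      · have : b = a := Fin.castLE_injective hle hba
        exact this ▸ hb
      · have : (a : ℕ) < d := a.isLt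
        rw [Fin.coe_castLE] at hd'
        omega
    · intro h i hi
      simp only [hψ, Finset.mem_union, Finset.mem_map] at hi ⊢
      rcases hi with ⟨b, hb, hbi⟩ | hEm
      · exact Or.inl ⟨b, h hb, hbi⟩
      · exact Or.inr hEm
  have hordψ : ∀ x y : P, x ≤ y ↔ ψ x ⊆ ψ y :=
    fun x y => (hord x y).trans (key x y).symm
  have hinjψ : Function.Injective ψ := by
    intro x y hxy
    have h1 : ψ x ⊆ ψ y := by rw [hxy]
    have h2 : ψ y ⊆ ψ x := by rw [hxy]
    exact le_antisymm ((hordψ x y).mpr h1) ((hordψ y x).mpr h2)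
  have hne : ∀ x : P, (ψ x).Nonempty := by
    intro x
    by_cases hmin : ∃ x0 : P, ∀ z : P, x0 ≤ z
    · have hmP : 1 ≤ mP := by
        rw [hm, if_pos hmin]; omega
      have hdn : d < d + mP := by omega
      refine ⟨⟨d, hdn⟩, ?_⟩
      simp only [hψ, Finset.mem_union, hE, Finset.mem_filter, Finset.mem_univ,
        true_and]
      exact Or.inr (by simpa using hmin)
    · obtain ⟨a, ha⟩ : (φ x).Nonempty := by
        rw [Finset.nonempty_iff_ne_empty]
        intro hemp
        exact hmin ⟨x, fun z => (hord x z).mpr (by simp [hemp])⟩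
      refine ⟨Fin.castLE hle a, ?_⟩
      simp only [hψ, Finset.mem_union, Finset.mem_map, Fin.castLEEmb_apply]
      exact Or.inl ⟨a, ha, rfl⟩
  have hnu : ∀ x : P, ψ x ≠ Finset.univ := by
    intro x hx
    by_cases hmax : ∃ y0 : P, ∀ z : P, z ≤ y0
    · have hmP : 1 ≤ mP := by
        rw [hm, if_pos hmax]; omega
      have hdn : d ≤ d + mP - 1 := by omega
      have hlt : d + mP - 1 < d + mP := by omega
      have hi : (⟨d + mP - 1, hlt⟩ : Fin (d + mP)) ∈ ψ x := by
        rw [hx]; exact Finset.mem_univ _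
      simp only [hψ, Finset.mem_union, Finset.mem_map, Fin.castLEEmb_apply,
        hE, Finset.mem_filter] at hi
      rcases hi with ⟨b, _, hbi⟩ | ⟨_, hd', hmin⟩
      · have hb : (b : ℕ) < d := b.isLt
        have : ((Fin.castLE hle b : Fin (d + mP)) : ℕ) = d + mP - 1 := by rw [hbi]
        rw [Fin.coe_castLE] at this
        omega
      · -- has both min and max, so mP = 2 and n - 1 = d + 1 ≠ d
        have hmP2 : mP = 2 := by
          rw [hm, if_pos hmax, if_pos hmin]
        omega
    · have hfull : ∀ a : Fin d, a ∈ φ x := by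
        intro a
        have hi : Fin.castLE hle a ∈ ψ x := by
          rw [hx]; exact Finset.mem_univ _
        simp only [hψ, Finset.mem_union, Finset.mem_map, Fin.castLEEmb_apply,
          hE, Finset.mem_filter] at hi
        rcases hi with ⟨b, hb, hba⟩ | ⟨_, hd', _⟩
        · have : b = a := Fin.castLE_injective hle hba
          exact this ▸ hb
        · have : (a : ℕ) < d := a.isLt
          rw [Fin.coe_castLE] at hd'
          omega
      exact hmax ⟨x, fun z => (hord z x).mpr (fun b _ => hfull b)⟩
  obtain ⟨x0⟩ : Nonempty P := Fintype.card_pos_iff.mp (by omega)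
  exact ⟨ψ, hinjψ, hordψ,
    c (ψ x0), fun x => hsame (ψ x) (ψ x0) (hne x) (hnu x) (hne x0) (hnu x0)⟩
end

section
/- Let $\mathbf{P}$ be a finite poset with at least $2$ elements, let $d = \dim_2(\mathbf{P})$ be the least integer $N$ such that there is an embedding of $\mathbf{P}$ into the subsets of $[N]$ (an injection $\phi$ with $x \le y$ in $\mathbf{P}$ if and only if $\phi(x) \subseteq \phi(y)$), and let $m(\mathbf{P}) \in \{0,1,2\}$ be the number of extremal elements of $\mathbf{P}$ (an element $x$ with $x \le z$ for all $z \in \mathbf{P}$ counts once, and an element $y$ with $z \le y$ for all $z \in \mathbf{P}$ counts once). Then for $n = d + m(\mathbf{P})$, there exists a coloring of the subsets of $[n-1]$ with three colors containing no monochromatic copy of $\mathbf{P}$ and no two incomparable subsets of different colors. Explicitly: color $\varnothing$ with color $1$, color $[n-1]$ with color $2$, and color all other subsets with color $3$. (Hence $RR(\mathbf{P},\mathbf{A}_2) \ge \dim_2(\mathbf{P}) + m(\mathbf{P})$, and combined with the upper bound, $RR(\mathbf{P},\mathbf{A}_2) = \dim_2(\mathbf{P}) + m(\mathbf{P})$.)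 -/
section Aux
variable {P : Type*} [PartialOrder P]

/-- delete an unused coordinate -/
lemma shrink_succ {N : ℕ} (φ : P → Finset (Fin (N+1)))
    (hinj : Function.Injective φ) (hord : ∀ x y : P, x ≤ y ↔ φ x ⊆ φ y)
    (b : Fin (N+1)) (hb : ∀ z, b ∉ φ z) :
    ∃ ψ : P → Finset (Fin N), Function.Injective ψ ∧ (∀ x y : P, x ≤ y ↔ ψ x ⊆ ψ y) ∧
      ∀ a : Fin (N+1), a ≠ b → (∀ z, a ∉ φ z) → ∃ a', ∀ z, a' ∉ ψ z := by
  have hi : Function.Injective b.succAbove := Fin.succAbove_right_injective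
  set ψ : P → Finset (Fin N) := fun z => (φ z).preimage b.succAbove hi.injOn with hψ
  have key : ∀ z, Finset.image b.succAbove (ψ z) = φ z := by
    intro z
    ext x
    simp only [hψ, Finset.mem_image, Finset.mem_preimage]
    constructor
    · rintro ⟨j, hj, rfl⟩; exact hj
    · intro hx
      obtain ⟨j, hj⟩ := Fin.exists_succAbove_eq (fun h : x = b => hb z (h ▸ hx))
      exact ⟨j, by rw [hj]; exact hx, hj⟩
  refine ⟨ψ, ?_, ?_, ?_⟩
  · intro x y h
    apply hinj
    rw [← key x, ← key y, h]
  · intro x y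
    rw [hord x y]
    constructor
    · intro h j hj
      simp only [hψ, Finset.mem_preimage] at hj ⊢
      exact h hj
    · intro h
      rw [← key x, ← key y]
      exact Finset.image_subset_image h
  · intro a ha hav
    obtain ⟨j, hj⟩ := Fin.exists_succAbove_eq ha
    refine ⟨j, fun z hz => ?_⟩
    simp only [hψ, Finset.mem_preimage] at hz
    rw [hj] at hz
    exact hav z hz

lemma shrink {n : ℕ} (φ : P → Finset (Fin n))
    (hinj : Function.Injective φ) (hord : ∀ x y : P, x ≤ y ↔ φ x ⊆ φ y)
    (b : Fin n) (hb : ∀ z, b ∉ φ z) :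
    ∃ ψ : P → Finset (Fin (n-1)), Function.Injective ψ ∧ (∀ x y : P, x ≤ y ↔ ψ x ⊆ ψ y) ∧
      ∀ a : Fin n, a ≠ b → (∀ z, a ∉ φ z) → ∃ a', ∀ z, a' ∉ ψ z := by
  cases n with
  | zero => exact absurd b.pos (lt_irrefl 0)
  | succ m => exact shrink_succ φ hinj hord b hb

/-- strip a common element -/
lemma strip {n : ℕ} (φ : P → Finset (Fin n))
    (hinj : Function.Injective φ) (hord : ∀ x y : P, x ≤ y ↔ φ x ⊆ φ y)
    (a : Fin n) (ha : ∀ z, a ∈ φ z) :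
    ∃ ψ : P → Finset (Fin n), Function.Injective ψ ∧ (∀ x y : P, x ≤ y ↔ ψ x ⊆ ψ y) ∧
      (∀ z, a ∉ ψ z) ∧ ∀ b : Fin n, (∀ z, b ∉ φ z) → ∀ z, b ∉ ψ z := by
  refine ⟨fun z => (φ z).erase a, ?_, ?_, fun z => Finset.notMem_erase a _,
    fun b hb z hz => hb z (Finset.mem_of_mem_erase hz)⟩
  · intro x y h
    apply hinj
    rw [← Finset.insert_erase (ha x), ← Finset.insert_erase (ha y)]
    exact congrArg (insert a) h
  · intro x y
    rw [hord x y]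
    constructor
    · exact fun h => Finset.erase_subset_erase a h
    · intro h
      rw [← Finset.insert_erase (ha x), ← Finset.insert_erase (ha y)]
      exact Finset.insert_subset_insert a h

end Aux


open Classical in
/-- For a finite poset `P` with at least two elements, with `d = dim₂(P)` and `mP`
its number of extremal elements, there is a `3`-coloring of the subsets of
`[d + mP - 1]` with no monochromatic copy of `P` and no two incomparable subsets of
different colors.  Hence `RR(P, A₂) ≥ dim₂(P) + m(P)`. -/
theorem RR_P_A2_lower (P : Type*) [PartialOrder P] [Fintype P]
    (hcard : 2 ≤ Fintype.card P) (d mP : ℕ)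
    (hd : IsLeast {N | ∃ φ : P → Finset (Fin N),
      Function.Injective φ ∧ ∀ x y : P, x ≤ y ↔ φ x ⊆ φ y} d)
    (hm : mP = (if ∃ x : P, ∀ z : P, x ≤ z then 1 else 0) +
               (if ∃ y : P, ∀ z : P, z ≤ y then 1 else 0)) :
    ∃ c : Finset (Fin (d + mP - 1)) → Fin 3,
      (¬∃ φ : P → Finset (Fin (d + mP - 1)), Function.Injective φ ∧
          (∀ x y : P, x ≤ y ↔ φ x ⊆ φ y) ∧ ∃ col, ∀ x : P, c (φ x) = col) ∧
      (∀ X Y : Finset (Fin (d + mP - 1)), ¬X ⊆ Y → ¬Y ⊆ X → c X = c Y) := by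
    classical
  refine ⟨fun X => if X = ∅ then 0 else if X = Finset.univ then 1 else 2, ?_, ?_⟩
  · rintro ⟨φ, hinj, hord, col, hcol⟩
    simp only [] at hcol
    -- d ≥ 1
    obtain ⟨φ₀, hφ₀inj, -⟩ := hd.1
    have hd1 : 1 ≤ d := by
      by_contra h
      push_neg at h
      interval_cases d
      have h2 := Fintype.card_le_of_injective φ₀ hφ₀inj
      rw [Fintype.card_finset, Fintype.card_fin] at h2; norm_num at h2
      omega
    -- two distinct elements
    obtain ⟨p, q, hpq⟩ := Fintype.exists_pair_of_one_lt_card (α := P) (by omega)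
    have hother : ∀ z : P, ∃ w : P, w ≠ z := by
      intro z
      rcases eq_or_ne z p with rfl | h
      · exact ⟨q, Ne.symm hpq⟩
      · exact ⟨p, h.symm⟩
    -- all sets nonempty
    have hne : ∀ z, φ z ≠ ∅ := by
      intro z hz
      obtain ⟨w, hw⟩ := hother z
      have h1 := hcol z
      have h2 := hcol w
      rw [hz, if_pos rfl] at h1
      have hwne : φ w ≠ ∅ := fun h => hw (hinj (h.trans hz.symm))
      rw [if_neg hwne] at h2
      rw [← h1] at h2
      split at h2 <;> simp at h2
    have hn1 : 0 < d + mP - 1 := by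
      obtain ⟨a, -⟩ := Finset.nonempty_iff_ne_empty.2 (hne p)
      exact a.pos
    have : Nonempty (Fin (d + mP - 1)) := ⟨⟨0, hn1⟩⟩
    have huniv_ne : (Finset.univ : Finset (Fin (d + mP - 1))) ≠ ∅ :=
      Finset.nonempty_iff_ne_empty.1 Finset.univ_nonempty
    -- all sets ≠ univ
    have hnu : ∀ z, φ z ≠ Finset.univ := by
      intro z hz
      obtain ⟨w, hw⟩ := hother z
      have h1 := hcol z
      have h2 := hcol w
      rw [hz, if_neg huniv_ne, if_pos rfl] at h1
      have hwne : φ w ≠ Finset.univ := fun h => hw (hinj (h.trans hz.symm))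
      rw [if_neg hwne] at h2
      rw [← h1] at h2
      split at h2 <;> simp at h2
    by_cases hmin : ∃ x : P, ∀ z : P, x ≤ z <;>
      by_cases hmax : ∃ y : P, ∀ z : P, z ≤ y
    · -- both: mP = 2
      simp only [hmin, hmax, if_true] at hm
      obtain ⟨x₀, hx₀⟩ := hmin
      obtain ⟨y₀, hy₀⟩ := hmax
      obtain ⟨a, ha⟩ := Finset.nonempty_iff_ne_empty.2 (hne x₀)
      obtain ⟨b, hb⟩ : ∃ b, b ∉ φ y₀ := by
        by_contra h
        push_neg at h
        exact hnu y₀ (Finset.eq_univ_iff_forall.2 h)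
      have haall : ∀ z, a ∈ φ z := fun z => (hord x₀ z).1 (hx₀ z) ha
      have hball : ∀ z, b ∉ φ z := fun z hbz => hb ((hord z y₀).1 (hy₀ z) hbz)
      have hab : b ≠ a := fun h => hb (h ▸ haall y₀)
      obtain ⟨φ₁, i1, o1, hav1, htr1⟩ := strip φ hinj hord a haall
      obtain ⟨ψ, i2, o2, h3⟩ := shrink φ₁ i1 o1 a hav1
      obtain ⟨b', hb'⟩ := h3 b hab (htr1 b hball)
      obtain ⟨ψ₂, i4, o4, -⟩ := shrink ψ i2 o2 b' hb'
      have hle := hd.2 ⟨ψ₂, i4, o4⟩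
      omega
    · -- min only: mP = 1
      simp only [hmin, hmax, if_true, if_false] at hm
      obtain ⟨x₀, hx₀⟩ := hmin
      obtain ⟨a, ha⟩ := Finset.nonempty_iff_ne_empty.2 (hne x₀)
      have haall : ∀ z, a ∈ φ z := fun z => (hord x₀ z).1 (hx₀ z) ha
      obtain ⟨φ₁, i1, o1, hav1, -⟩ := strip φ hinj hord a haall
      obtain ⟨ψ, i2, o2, -⟩ := shrink φ₁ i1 o1 a hav1
      have hle := hd.2 ⟨ψ, i2, o2⟩
      omega
    · -- max only: mP = 1
      simp only [hmin, hmax, if_true, if_false] at hm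
      obtain ⟨y₀, hy₀⟩ := hmax
      obtain ⟨b, hb⟩ : ∃ b, b ∉ φ y₀ := by
        by_contra h
        push_neg at h
        exact hnu y₀ (Finset.eq_univ_iff_forall.2 h)
      have hball : ∀ z, b ∉ φ z := fun z hbz => hb ((hord z y₀).1 (hy₀ z) hbz)
      obtain ⟨ψ, i2, o2, -⟩ := shrink φ hinj hord b hball
      have hle := hd.2 ⟨ψ, i2, o2⟩
      omega
    · -- neither: mP = 0
      simp only [hmin, hmax, if_false] at hm
      have hle := hd.2 ⟨φ, hinj, hord⟩
      omega
  · intro X Y hXY hYX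
    have hX1 : X ≠ ∅ := fun h => hXY (h ▸ Finset.empty_subset Y)
    have hY1 : Y ≠ ∅ := fun h => hYX (h ▸ Finset.empty_subset X)
    have hX2 : X ≠ Finset.univ := fun h => hYX (h ▸ Finset.subset_univ Y)
    have hY2 : Y ≠ Finset.univ := fun h => hXY (h ▸ Finset.subset_univ X)
    simp [hX1, hY1, hX2, hY2]
end

section
/- For all integers $k \ge 2$ and $1 \le m < n$, there exists a coloring of the subsets of $[n(k-1)+1]$ (with an arbitrary set of colors) containing no monochromatic copy of $\mathbf{V}_{m,n}$ and no rainbow copy of $\mathbf{A}_k$ (no $k$ pairwise incomparable subsets with pairwise distinct colors). Explicitly: color each subset $X \notin \{\varnothing, [n(k-1)+1]\}$ with color $\lceil |X|/n \rceil$ and color $\varnothing$ and $[n(k-1)+1]$ with color $k$. (Hence $RR(\mathbf{V}_{m,n},\mathbf{A}_k) > n(k-1)+1$.) -/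
/-- The explicit coloring: `∅` and the full set get color `k-1`, any other set `X`
gets color `(|X|-1)/n`. -/
def myColor (k n N : ℕ) (X : Finset (Fin N)) : ℕ :=
  if X = ∅ ∨ X = Finset.univ then k - 1 else (X.card - 1) / n

/-- For `k ≥ 2` and `1 ≤ m < n` there is a coloring of the subsets of
`[n(k-1)+1]` with no monochromatic copy of `V_{m,n}` and no rainbow copy of
`A_k` (`k` pairwise incomparable sets with pairwise distinct colors).
Hence `RR(V_{m,n}, A_k) > n(k-1)+1`. -/
theorem RR_Vmn_Ak_lower (k m n : ℕ) (hk : 2 ≤ k) (hm : 1 ≤ m) (hmn : m < n) :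
    ∃ c : Finset (Fin (n * (k - 1) + 1)) → ℕ,
      (¬∃ col, VCopyColored m n c col) ∧
      ¬∃ f : Fin k → Finset (Fin (n * (k - 1) + 1)),
        (∀ i j, i ≠ j → ¬f i ⊆ f j) ∧ (∀ i j, i ≠ j → c (f i) ≠ c (f j)) := by
  have hn : 0 < n := by omega
  set N := n * (k - 1) + 1 with hN
  -- key bound: a non-special set's generic color is < k - 1
  have key : ∀ X : Finset (Fin N), X ≠ ∅ → X ≠ Finset.univ → (X.card - 1) / n < k - 1 := by
    intro X hne hnu
    have h1 : 1 ≤ X.card := Finset.card_pos.mpr (Finset.nonempty_iff_ne_empty.mpr hne)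
    have h2 : X.card < N := by
      have hss : X ⊂ Finset.univ := Finset.ssubset_univ_iff.mpr hnu
      have := Finset.card_lt_card hss
      simpa [Finset.card_univ] using this
    rw [Nat.div_lt_iff_lt_mul hn]
    have : (k - 1) * n = n * (k - 1) := Nat.mul_comm _ _
    omega
  refine ⟨myColor k n N, ?_, ?_⟩
  · rintro ⟨col, X, Y, Z, hYmono, hZmono, hXY, hXZ, hinc, hcX, hcY, hcZ⟩
    have hn2 : 2 ≤ n := by omega
    have spec : ∀ W : Finset (Fin N), myColor k n N W = k - 1 →
        W = ∅ ∨ W = Finset.univ := by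
      intro W hW
      by_contra h
      push_neg at h; rw [Finset.nonempty_iff_ne_empty] at h
      have := key W h.1 h.2
      rw [myColor, if_neg (by tauto)] at hW
      omega
    by_cases hXsp : X = ∅ ∨ X = Finset.univ
    · -- col = k - 1, so Y 0 and Z 0 are special, hence comparable
      have hcol : col = k - 1 := by rw [myColor, if_pos hXsp] at hcX; omega
      have hY0 := spec (Y ⟨0, by omega⟩) (by rw [hcY]; omega)
      have hZ0 := spec (Z ⟨0, by omega⟩) (by rw [hcZ]; omega)
      have hincYZ := hinc ⟨0, by omega⟩ ⟨0, by omega⟩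
      rcases hY0 with h | h <;> rcases hZ0 with h' | h'
      · exact hincYZ.1 (by simp [h, h'])
      · exact hincYZ.1 (by simp [h, h'])
      · exact hincYZ.2 (by simp [h, h'])
      · exact hincYZ.1 (by simp [h, h'])
    · push_neg at hXsp; rw [Finset.nonempty_iff_ne_empty] at hXsp
      have hcX' : (X.card - 1) / n = col := by
        rw [myColor, if_neg (by tauto)] at hcX; exact hcX
      have hcolk : col < k - 1 := hcX' ▸ key X hXsp.1 hXsp.2
      -- all Z j are non-special
      have hZns : ∀ j : Fin n, (Z j ≠ ∅ ∧ Z j ≠ Finset.univ) ∧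
          ((Z j).card - 1) / n = col := by
        intro j
        have hcZj := hcZ j
        by_cases hs : Z j = ∅ ∨ Z j = Finset.univ
        · rw [myColor, if_pos hs] at hcZj; omega
        · push_neg at hs; rw [Finset.nonempty_iff_ne_empty] at hs
          rw [myColor, if_neg (by tauto)] at hcZj
          exact ⟨hs, hcZj⟩
      -- chain bound
      have hchain : ∀ jv : ℕ, ∀ h : jv < n, X.card + 1 + jv ≤ (Z ⟨jv, h⟩).card := by
        intro jv
        induction jv with
        | zero =>
          intro h
          have := Finset.card_lt_card (hXZ ⟨0, h⟩)
          omega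
        | succ j ih =>
          intro h
          have h' : j < n := by omega
          have h1 := ih h'
          have hlt : Z ⟨j, h'⟩ ⊂ Z ⟨j + 1, h⟩ := hZmono (by simp [Fin.lt_def])
          have := Finset.card_lt_card hlt
          omega
      have hlast := hchain (n - 1) (by omega)
      set W := Z ⟨n - 1, by omega⟩ with hW
      have hWcol : (W.card - 1) / n = col := (hZns _).2
      have hWne : W ≠ ∅ := (hZns _).1.1
      have hW1 : 1 ≤ W.card := Finset.card_pos.mpr (Finset.nonempty_iff_ne_empty.mpr hWne)
      have hX1 : 1 ≤ X.card := Finset.card_pos.mpr (Finset.nonempty_iff_ne_empty.mpr hXsp.1)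
      -- X.card - 1 ≥ col * n
      have hXlow : col * n ≤ X.card - 1 := by
        rw [← hcX']; exact Nat.div_mul_le_self _ _
      -- W.card - 1 < (col + 1) * n
      have hWhigh : W.card - 1 < (col + 1) * n := by
        rw [← Nat.div_lt_iff_lt_mul hn, hWcol]; omega
      have hmul : (col + 1) * n = col * n + n := by ring
      omega
  · rintro ⟨f, hanti, hdist⟩
    have hns : ∀ i, f i ≠ ∅ ∧ f i ≠ Finset.univ := by
      intro i
      obtain ⟨j, hj⟩ := Fintype.exists_ne_of_one_lt_card (by simpa using (by omega : 1 < k)) i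
      constructor
      · intro h
        exact hanti i j (Ne.symm hj) (by simp [h])
      · intro h
        exact hanti j i hj (by simp [h])
    have hlt : ∀ i, myColor k n N (f i) < k - 1 := by
      intro i
      rw [myColor, if_neg (by have := hns i; tauto)]
      exact key _ (hns i).1 (hns i).2
    have ginj : Function.Injective (fun i : Fin k => (⟨myColor k n N (f i), hlt i⟩ : Fin (k - 1))) := by
      intro i j hij
      by_contra hne
      exact hdist i j hne (by simpa using congrArg Fin.val hij)
    have := Fintype.card_le_of_injective _ ginj
    simp at this
    omega
end

section
/- There exists a coloring of the subsets of $[3]$ with two colors under which there is no monochromatic weak copy of $\mathbf{V}_{1,2}$, i.e. no four distinct subsets $X, Y, Z_1, Z_2$ of $[3]$ with $X \subsetneq Y$, $X \subsetneq Z_1 \subsetneq Z_2$ all of the same color. (Combined with the upper bound, the weak Boolean Ramsey number satisfies $R_w(\mathbf{V}_{1,2},\mathbf{V}_{1,2}) = 4$.) -/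
/-- There is a `2`-coloring of the subsets of `[3]` with no monochromatic weak copy
of `V_{1,2}`: no four distinct subsets `X ⊊ Y`, `X ⊊ Z₁ ⊊ Z₂` of the same color.
Hence `R_w(V_{1,2}, V_{1,2}) = 4`. -/
theorem Rw_V12_lower :
    ∃ c : Finset (Fin 3) → Fin 2,
      ¬∃ X Y Z₁ Z₂ : Finset (Fin 3),
        Y ≠ Z₁ ∧ Y ≠ Z₂ ∧ X ⊂ Y ∧ X ⊂ Z₁ ∧ Z₁ ⊂ Z₂ ∧
        c Y = c X ∧ c Z₁ = c X ∧ c Z₂ = c X := by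
  use fun S => if S.card ≤ 1 then 0 else 1
  rintro ⟨X, Y, Z₁, Z₂, -, -, -, h1, h2, -, hcz1, hcz2⟩
  have a1 := Finset.card_lt_card h1
  have a2 := Finset.card_lt_card h2
  have a3 : Z₂.card ≤ 3 := by
    simpa using Finset.card_le_card (Finset.subset_univ Z₂)
  simp only at hcz1 hcz2
  split_ifs at hcz1 hcz2 <;> first | omega | simp_all
end
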